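/- arXiv:1607.02689 — 10 statements merged into one kernel-verified Lean document; each statement's English description precedes it below -/
import Mathlib

section
/- Let 0 < δ < 1 and define q(x) = x(e^{εx} + 1) + λ(e^{εx} - 1) for x > 0, where ε = 1/δ - 1 and λ > -2δ. Then q is strictly log-concave on (0,∞), i.e., q'(x)^2 - q''(x)q(x) > 0 for all x > 0. -/
open Real

theorem stmt_1 (δ lam : ℝ) (hδ : 0 < δ) (hδ1 : δ < 1) (hlam : lam > -2 * δ)
    (ε : ℝ) (hε : ε = 1 / δ - 1)
    (q : ℝ → ℝ) (hq : ∀ x, q x = x * (Real.exp (ε * x) + 1) + lam * (Real.exp (ε * x) - 1)) :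
    ∀ x : ℝ, 0 < x → (deriv q x) ^ 2 - (deriv (deriv q) x) * q x > 0 := by
  have hε0 : 0 < ε := by
    rw [hε]
    have : 1 < 1 / δ := one_lt_one_div hδ hδ1
    linarith
  have hqfun : q = fun x => x * (Real.exp (ε * x) + 1) + lam * (Real.exp (ε * x) - 1) :=
    funext hq
  have hexp : ∀ x : ℝ, HasDerivAt (fun y => Real.exp (ε * y)) (ε * Real.exp (ε * x)) x := by
    intro x
    have := (Real.hasDerivAt_exp (ε * x)).comp x ((hasDerivAt_id x).const_mul ε)
    exact this.congr_deriv (by ring)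
  have key : ∀ x : ℝ, HasDerivAt q
      (Real.exp (ε * x) + 1 + ε * (x + lam) * Real.exp (ε * x)) x := by
    intro x
    rw [hqfun]
    have h1 : HasDerivAt (fun y : ℝ => y * (Real.exp (ε * y) + 1))
        (1 * (Real.exp (ε * x) + 1) + x * (ε * Real.exp (ε * x))) x :=
      (hasDerivAt_id x).mul ((hexp x).add_const 1)
    have h2 : HasDerivAt (fun y : ℝ => lam * (Real.exp (ε * y) - 1))
        (lam * (ε * Real.exp (ε * x))) x := ((hexp x).sub_const 1).const_mul lam
    exact (h1.add h2).congr_deriv (by ring)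
  have hd1 : deriv q = fun x => Real.exp (ε * x) + 1 + ε * (x + lam) * Real.exp (ε * x) :=
    funext fun x => (key x).deriv
  have key2 : ∀ x : ℝ, HasDerivAt (deriv q)
      (ε * Real.exp (ε * x) * (2 + ε * (x + lam))) x := by
    intro x
    rw [hd1]
    have h1 : HasDerivAt (fun y : ℝ => Real.exp (ε * y) + 1) (ε * Real.exp (ε * x)) x :=
      (hexp x).add_const 1
    have h2 : HasDerivAt (fun y : ℝ => ε * (y + lam) * Real.exp (ε * y))
        (ε * 1 * Real.exp (ε * x) + ε * (x + lam) * (ε * Real.exp (ε * x))) x := by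
      have ha : HasDerivAt (fun y : ℝ => ε * (y + lam)) (ε * 1) x :=
        ((hasDerivAt_id x).add_const lam).const_mul ε
      exact ha.mul (hexp x)
    exact (h1.add h2).congr_deriv (by ring)
  intro x hx
  rw [(key2 x).deriv, (key x).deriv, hq x]
  set E := Real.exp (ε * x) with hE
  set s := Real.exp (ε * x / 2) with hs
  have hs0 : 0 < s := Real.exp_pos _
  have hsE : s * s = E := by
    rw [hs, hE, ← Real.exp_add]
    ring_nf
  have hu : 0 < ε * x := mul_pos hε0 hx
  -- from sinh t > t : exp t - exp (-t) > 2t with t = ε*x/2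
  have hsinh : ε * x / 2 < Real.sinh (ε * x / 2) := Real.self_lt_sinh_iff.mpr (by linarith)
  rw [Real.sinh_eq] at hsinh
  have hinv : Real.exp (-(ε * x / 2)) = 1 / s := by
    rw [hs, Real.exp_neg]
    ring
  rw [hinv] at hsinh
  -- so s - 1/s > ε*x, hence E - 1 > s * (ε*x)
  have h1 : E - 1 > s * (ε * x) := by
    have := mul_lt_mul_of_pos_left hsinh hs0
    have hss : s * (1 / s) = 1 := by field_simp
    nlinarith [hsE]
  have h2 : (E - 1) ^ 2 - E * (ε * x) ^ 2 > 0 := by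
    nlinarith [mul_pos hs0 hu, hsE]
  nlinarith [sq_nonneg (ε * lam + 2), Real.exp_pos (ε * x), h2]
end

section
/- Let k ≥ 1, δ_1, ..., δ_k ∈ (0, δ) be positive reals and λ_1, ..., λ_k > 0. Then the function h(u) = Σ_{i=1}^k λ_i (e^{-u/δ} - e^{-u/δ_i}) is strictly log-concave on (0, ∞). -/
open Real

private lemma strictConcaveOn_congr {s : Set ℝ} {f g : ℝ → ℝ}
    (hf : StrictConcaveOn ℝ s f) (hfg : ∀ x ∈ s, f x = g x) :
    StrictConcaveOn ℝ s g := by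
  refine ⟨hf.1, fun x hx y hy hxy a b ha hb hab => ?_⟩
  rw [← hfg x hx, ← hfg y hy, ← hfg _ (hf.1 hx hy ha.le hb.le hab)]
  exact hf.2 hx hy hxy ha hb hab

theorem stmt_2 (k : ℕ) (hk : 1 ≤ k) (δ : ℝ) (δi lami : Fin k → ℝ)
    (hδi : ∀ i, 0 < δi i ∧ δi i < δ) (hlami : ∀ i, 0 < lami i)
    (h : ℝ → ℝ)
    (hh : ∀ u, h u = ∑ i, lami i * (Real.exp (-u / δ) - Real.exp (-u / δi i))) :
    StrictConcaveOn ℝ (Set.Ioi (0 : ℝ)) (fun u => Real.log (h u)) := by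
  have hne : Nonempty (Fin k) := ⟨⟨0, hk⟩⟩
  have hδ : 0 < δ := (hδi (Classical.arbitrary (Fin k))).1.trans (hδi _).2
  set c : Fin k → ℝ := fun i => 1 / δi i - 1 / δ with hc_def
  have hc : ∀ i, 0 < c i := by
    intro i
    have h1 : 1 / δ < 1 / δi i := one_div_lt_one_div_of_lt (hδi i).1 (hδi i).2
    simp only [hc_def]; linarith
  set g : ℝ → ℝ := fun u => ∑ i, lami i * (1 - Real.exp (-(c i) * u)) with hg_def
  -- positivity of g on Ioi 0
  have hg_pos : ∀ u ∈ Set.Ioi (0 : ℝ), 0 < g u := by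
    intro u hu
    apply Finset.sum_pos _ Finset.univ_nonempty
    intro i _
    have : Real.exp (-(c i) * u) < 1 := by
      rw [Real.exp_lt_one_iff]
      have := mul_pos (hc i) hu
      nlinarith
    have := hlami i
    nlinarith
  -- factorization h u = exp(-u/δ) * g u
  have hfact : ∀ u : ℝ, h u = Real.exp (-u / δ) * g u := by
    intro u
    rw [hh, hg_def, Finset.mul_sum]
    apply Finset.sum_congr rfl
    intro i _
    have hexp : Real.exp (-u / δ) * Real.exp (-(c i) * u) = Real.exp (-u / δi i) := by
      rw [← Real.exp_add]
      congr 1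
      simp only [hc_def]
      ring
    rw [← hexp]; ring
  -- strict concavity of g on Ioi 0
  have hgconc : StrictConcaveOn ℝ (Set.Ioi (0 : ℝ)) g := by
    refine ⟨convex_Ioi 0, fun x _ y _ hxy a b ha hb hab => ?_⟩
    simp only [hg_def, smul_eq_mul, Finset.mul_sum, ← Finset.sum_add_distrib]
    apply Finset.sum_lt_sum_of_nonempty Finset.univ_nonempty
    intro i _
    have hne' : -(c i) * x ≠ -(c i) * y := by
      have := (hc i).ne'
      intro hcontra
      apply hxy
      field_simp at hcontra
      linarith
    have key := strictConvexOn_exp.2 (Set.mem_univ (-(c i) * x)) (Set.mem_univ (-(c i) * y))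
      hne' ha hb hab
    simp only [smul_eq_mul] at key
    have harg : -(c i) * (a * x + b * y) = a * (-(c i) * x) + b * (-(c i) * y) := by ring
    rw [harg]
    have := hlami i
    nlinarith [key]
  -- strict concavity of log ∘ g on Ioi 0
  have hlogg : StrictConcaveOn ℝ (Set.Ioi (0 : ℝ)) (fun u => Real.log (g u)) := by
    refine ⟨convex_Ioi 0, fun x hx y hy hxy a b ha hb hab => ?_⟩
    have hmid : a • x + b • y ∈ Set.Ioi (0 : ℝ) := (convex_Ioi 0) hx hy ha.le hb.le hab
    have h1 : a * g x + b * g y < g (a • x + b • y) := by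
      have := hgconc.2 hx hy hxy ha hb hab
      simpa [smul_eq_mul] using this
    have hgx := hg_pos x hx
    have hgy := hg_pos y hy
    have hpos : 0 < a * g x + b * g y := by positivity
    calc a • Real.log (g x) + b • Real.log (g y)
        ≤ Real.log (a • g x + b • g y) :=
          strictConcaveOn_log_Ioi.concaveOn.2 hgx hgy ha.le hb.le hab
      _ = Real.log (a * g x + b * g y) := by simp [smul_eq_mul]
      _ < Real.log (g (a • x + b • y)) := Real.log_lt_log hpos h1
  -- linear part is concave
  have hlin : ConcaveOn ℝ (Set.Ioi (0 : ℝ)) (fun u : ℝ => -u / δ) := by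
    refine ⟨convex_Ioi 0, fun x _ y _ a b _ _ _ => ?_⟩
    simp only [smul_eq_mul]
    apply le_of_eq
    ring
  have hsum : StrictConcaveOn ℝ (Set.Ioi (0 : ℝ)) (fun u => -u / δ + Real.log (g u)) := by
    have := hlogg.add_concaveOn hlin
    refine strictConcaveOn_congr this (fun x _ => ?_)
    simp only [Pi.add_apply]; ring
  refine strictConcaveOn_congr hsum (fun u hu => ?_)
  rw [hfact u, Real.log_mul (Real.exp_pos _).ne' (hg_pos u hu).ne', Real.log_exp]
end

section
/- Let α > 1 and g(x) = x^{α-1}e^{-x}/Γ(α). Then for all x > α - 1, g'(x)·(g''(x)² - g'(x)g'''(x)) < 0. -/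
open Real

noncomputable def gammaDens (α t : ℝ) : ℝ := t ^ (α - 1) * Real.exp (-t) / Real.Gamma α

noncomputable def gd1 (α t : ℝ) : ℝ := gammaDens α t * ((α - 1) / t - 1)

noncomputable def gd2 (α t : ℝ) : ℝ :=
  gammaDens α t * (((α - 1) / t - 1) ^ 2 - (α - 1) / t ^ 2)

noncomputable def gd3 (α t : ℝ) : ℝ :=
  gammaDens α t *
    (((α - 1) / t - 1) ^ 3 - 3 * (α - 1) * ((α - 1) / t - 1) / t ^ 2 + 2 * (α - 1) / t ^ 3)

lemma hasDerivAt_v (α : ℝ) {t : ℝ} (ht : 0 < t) :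
    HasDerivAt (fun s => (α - 1) / s - 1) (-(α - 1) / t ^ 2) t := by
  have h : HasDerivAt (fun s : ℝ => (α - 1) / s - 1)
      ((0 * t - (α - 1) * 1) / t ^ 2) t :=
    ((hasDerivAt_const t (α - 1)).div (hasDerivAt_id t) ht.ne').sub_const 1
  convert h using 1
  ring

lemma hasDerivAt_gd0 (α : ℝ) {t : ℝ} (ht : 0 < t) :
    HasDerivAt (gammaDens α) (gd1 α t) t := by
  have h1 : HasDerivAt (fun s : ℝ => s ^ (α - 1)) ((α - 1) * t ^ (α - 1 - 1)) t :=
    Real.hasDerivAt_rpow_const (Or.inl ht.ne')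
  have h2 : HasDerivAt (fun s : ℝ => Real.exp (-s)) (Real.exp (-t) * -1) t :=
    (hasDerivAt_neg t).exp
  have h := (h1.mul h2).div_const (Real.Gamma α)
  refine h.congr_deriv ?_
  unfold gd1 gammaDens
  rw [show t ^ (α - 1 - 1) = t ^ (α - 1) / t from Real.rpow_sub_one ht.ne' _]
  set p := t ^ (α - 1) with hp
  field_simp
  ring

lemma hasDerivAt_gd1 (α : ℝ) {t : ℝ} (ht : 0 < t) :
    HasDerivAt (gd1 α) (gd2 α t) t := by
  have h := (hasDerivAt_gd0 α ht).mul (hasDerivAt_v α ht)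
  refine h.congr_deriv ?_
  unfold gd2 gd1
  field_simp
  ring

lemma hasDerivAt_w2 (α : ℝ) {t : ℝ} (ht : 0 < t) :
    HasDerivAt (fun s => (α - 1) / s ^ 2) (-(2 * (α - 1)) / t ^ 3) t := by
  have h : HasDerivAt (fun s : ℝ => (α - 1) / s ^ 2)
      ((0 * t ^ 2 - (α - 1) * ((2 : ℕ) * t ^ (2 - 1))) / (t ^ 2) ^ 2) t :=
    (hasDerivAt_const t (α - 1)).div (hasDerivAt_pow 2 t) (pow_ne_zero 2 ht.ne')
  convert h using 1
  field_simp
  ring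

lemma hasDerivAt_gd2 (α : ℝ) {t : ℝ} (ht : 0 < t) :
    HasDerivAt (gd2 α) (gd3 α t) t := by
  have hv := hasDerivAt_v α ht
  have hvsq : HasDerivAt (fun s => ((α - 1) / s - 1) ^ 2)
      (2 * ((α - 1) / t - 1) ^ (2 - 1) * (-(α - 1) / t ^ 2)) t := hv.pow 2
  have hin := hvsq.sub (hasDerivAt_w2 α ht)
  have h := (hasDerivAt_gd0 α ht).mul hin
  refine h.congr_deriv ?_
  unfold gd3 gd1
  simp only [Pi.sub_apply, Nat.reduceSub, pow_one]
  have htne := ht.ne'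
  field_simp
  ring

lemma deriv1_eq (α : ℝ) {t : ℝ} (ht : 0 < t) :
    deriv (gammaDens α) t = gd1 α t := (hasDerivAt_gd0 α ht).deriv

lemma deriv2_eq (α : ℝ) {t : ℝ} (ht : 0 < t) :
    deriv (deriv (gammaDens α)) t = gd2 α t := by
  have hEq : deriv (gammaDens α) =ᶠ[nhds t] gd1 α := by
    filter_upwards [isOpen_Ioi.mem_nhds ht] with s hs using deriv1_eq α hs
  rw [hEq.deriv_eq]
  exact (hasDerivAt_gd1 α ht).deriv

lemma deriv3_eq (α : ℝ) {t : ℝ} (ht : 0 < t) :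
    deriv (deriv (deriv (gammaDens α))) t = gd3 α t := by
  have hEq : deriv (deriv (gammaDens α)) =ᶠ[nhds t] gd2 α := by
    filter_upwards [isOpen_Ioi.mem_nhds ht] with s hs using deriv2_eq α hs
  rw [hEq.deriv_eq]
  exact (hasDerivAt_gd2 α ht).deriv

theorem stmt_8 (α : ℝ) (hα : 1 < α) :
    ∀ x : ℝ, α - 1 < x →
      deriv (gammaDens α) x *
        ((deriv (deriv (gammaDens α)) x) ^ 2 -
          deriv (gammaDens α) x * deriv (deriv (deriv (gammaDens α))) x) < 0 := by
  intro x hx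
  have hc : (0 : ℝ) < α - 1 := by linarith
  have ht : (0 : ℝ) < x := lt_trans hc hx
  rw [deriv1_eq α ht, deriv2_eq α ht, deriv3_eq α ht]
  unfold gd1 gd2 gd3
  have hg : 0 < gammaDens α x := by
    unfold gammaDens
    exact div_pos (mul_pos (Real.rpow_pos_of_pos ht _) (Real.exp_pos _))
      (Real.Gamma_pos_of_pos (by linarith))
  set g := gammaDens α x with hgdef
  set c := α - 1 with hcdef
  set v := c / x - 1 with hvdef
  have hv : v < 0 := by
    have h : c / x < 1 := (div_lt_one ht).mpr hx
    rw [hvdef]; linarith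
  clear_value g v
  clear hgdef hvdef
  have hA : 0 < v ^ 2 - 2 * v / x + c / x ^ 2 := by
    have h1 : v / x < 0 := div_neg_of_neg_of_pos hv ht
    have h2 : 0 < c / x ^ 2 := div_pos hc (pow_pos ht 2)
    have h3 : (0 : ℝ) ≤ v ^ 2 := sq_nonneg v
    have : 2 * v / x = 2 * (v / x) := by ring
    rw [this]; linarith
  have key : (v ^ 2 - c / x ^ 2) ^ 2 -
      v * (v ^ 3 - 3 * c * v / x ^ 2 + 2 * c / x ^ 3) =
      (c / x ^ 2) * (v ^ 2 - 2 * v / x + c / x ^ 2) := by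
    field_simp
    ring
  have hpos : 0 < (v ^ 2 - c / x ^ 2) ^ 2 -
      v * (v ^ 3 - 3 * c * v / x ^ 2 + 2 * c / x ^ 3) := by
    rw [key]
    exact mul_pos (div_pos hc (pow_pos ht 2)) hA
  have hexpand : g * v * ((g * (v ^ 2 - c / x ^ 2)) ^ 2 -
      g * v * (g * (v ^ 3 - 3 * c * v / x ^ 2 + 2 * c / x ^ 3))) =
      (g ^ 3 * ((v ^ 2 - c / x ^ 2) ^ 2 -
        v * (v ^ 3 - 3 * c * v / x ^ 2 + 2 * c / x ^ 3))) * v := by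
    ring
  calc g * v * ((g * (v ^ 2 - c / x ^ 2)) ^ 2 -
        g * v * (g * (v ^ 3 - 3 * c * v / x ^ 2 + 2 * c / x ^ 3)))
      = (g ^ 3 * ((v ^ 2 - c / x ^ 2) ^ 2 -
          v * (v ^ 3 - 3 * c * v / x ^ 2 + 2 * c / x ^ 3))) * v := hexpand
    _ < 0 := mul_neg_of_pos_of_neg (mul_pos (pow_pos hg 3) hpos) hv
end

section
/- Let α ≥ 1, θ ∈ (0,1), X ~ Gamma(α,1), Z ~ Exponential(1) independent, h the density of X + θZ, and g_α the Gamma(α,1) density. Then h'(x)/g'_α(x) is strictly increasing in x on (α-1, ∞). -/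
open Real Set Filter

noncomputable def convDens (α θ x : ℝ) : ℝ :=
  ∫ t in (0:ℝ)..x, gammaDens α (x - t) * (θ⁻¹ * Real.exp (-t / θ))


noncomputable def Faux (α θ x : ℝ) : ℝ := ∫ σ in (0:ℝ)..x, σ ^ (α - 1) * Real.exp ((1/θ - 1) * σ)

noncomputable def Aaux (α θ x : ℝ) : ℝ := θ⁻¹ * (Real.exp (-((1/θ - 1) * x)) * Faux α θ x)

noncomputable def p1aux (α θ x : ℝ) : ℝ := θ⁻¹*x^4 - (α-1)*θ⁻¹*x^3 + (α-1)*x^2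

noncomputable def p2aux (α θ x : ℝ) : ℝ :=
  -((1/θ-1)*x^2) + ((α-1)*(1/θ-1) - (α-1))*x + ((α-1)^2 - (α-1))

noncomputable def Pt (α θ x : ℝ) : ℝ := x^(α-3) * p1aux α θ x + Aaux α θ x * p2aux α θ x

noncomputable def dp1aux (α θ x : ℝ) : ℝ := θ⁻¹*(4*x^3) - (α-1)*θ⁻¹*(3*x^2) + (α-1)*(2*x)

noncomputable def dp2aux (α θ x : ℝ) : ℝ := -((1/θ-1)*(2*x)) + ((α-1)*(1/θ-1) - (α-1))

noncomputable def dPt (α θ x : ℝ) : ℝ :=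
  ((α-3)*x^(α-4)*p1aux α θ x + x^(α-3)*dp1aux α θ x)
  + ((θ⁻¹*x^(α-1) - (1/θ-1)*Aaux α θ x)*p2aux α θ x + Aaux α θ x*dp2aux α θ x)



lemma wcont (α θ : ℝ) (hα : 1 ≤ α) :
    Continuous (fun σ : ℝ => σ ^ (α - 1) * Real.exp ((1/θ - 1) * σ)) := by
  apply Continuous.mul _ (by continuity)
  rw [continuous_iff_continuousAt]
  exact fun x => Real.continuousAt_rpow_const x _ (Or.inr (by linarith))

lemma hF (α θ : ℝ) (hα : 1 ≤ α) (x : ℝ) :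
    HasDerivAt (Faux α θ) (x ^ (α - 1) * Real.exp ((1/θ - 1) * x)) x := by
  have hc := wcont α θ hα
  exact intervalIntegral.integral_hasDerivAt_right (hc.intervalIntegrable 0 x)
    (hc.stronglyMeasurable.stronglyMeasurableAtFilter) hc.continuousAt

lemma conv_eq (α θ : ℝ) (hθ : 0 < θ) (x : ℝ) :
    convDens α θ x = θ⁻¹ * Real.exp (-(x/θ)) * Faux α θ x / Real.Gamma α := by
  unfold convDens Faux
  have h1 : ∀ t : ℝ, gammaDens α (x - t) * (θ⁻¹ * Real.exp (-t / θ))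
      = (fun σ => θ⁻¹ * Real.exp (-(x/θ)) / Real.Gamma α * (σ ^ (α-1) * Real.exp ((1/θ - 1) * σ))) (x - t) := by
    intro t
    unfold gammaDens
    have key : Real.exp (-(x - t)) * Real.exp (-t / θ) = Real.exp (-(x/θ)) * Real.exp ((1/θ-1)*(x-t)) := by
      rw [← Real.exp_add, ← Real.exp_add]; congr 1; field_simp; ring
    simp only
    linear_combination ((x - t) ^ (α-1) * θ⁻¹ / Real.Gamma α) * key
  calc (∫ t in (0:ℝ)..x, gammaDens α (x - t) * (θ⁻¹ * Real.exp (-t / θ)))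
      = ∫ t in (0:ℝ)..x, (fun σ => θ⁻¹ * Real.exp (-(x/θ)) / Real.Gamma α * (σ ^ (α-1) * Real.exp ((1/θ - 1) * σ))) (x - t) := by
        refine intervalIntegral.integral_congr fun t _ => h1 t
    _ = ∫ σ in (x - x)..(x - 0), θ⁻¹ * Real.exp (-(x/θ)) / Real.Gamma α * (σ ^ (α-1) * Real.exp ((1/θ - 1) * σ)) := by
        exact intervalIntegral.integral_comp_sub_left (fun σ => θ⁻¹ * Real.exp (-(x/θ)) / Real.Gamma α * (σ ^ (α-1) * Real.exp ((1/θ - 1) * σ))) x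
    _ = θ⁻¹ * Real.exp (-(x/θ)) * (∫ σ in (0:ℝ)..x, σ ^ (α-1) * Real.exp ((1/θ - 1) * σ)) / Real.Gamma α := by
        rw [sub_self, sub_zero, intervalIntegral.integral_const_mul]; ring

lemma hA (α θ : ℝ) (hα : 1 ≤ α) (x : ℝ) :
    HasDerivAt (Aaux α θ) (θ⁻¹ * x ^ (α - 1) - (1/θ - 1) * Aaux α θ x) x := by
  have h1 : HasDerivAt (fun y : ℝ => Real.exp (-((1/θ - 1) * y)))
      (Real.exp (-((1/θ - 1) * x)) * (-(1/θ - 1))) x := by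
    have : HasDerivAt (fun y : ℝ => -((1/θ - 1) * y)) (-(1/θ - 1)) x := by
      simpa using ((hasDerivAt_id x).const_mul (1/θ-1)).fun_neg
    exact this.exp
  have h2 := (h1.mul (hF α θ hα x)).const_mul θ⁻¹
  refine h2.congr_deriv ?_
  unfold Aaux
  have hee : Real.exp (-((1/θ - 1) * x)) * Real.exp ((1/θ - 1) * x) = 1 := by
    rw [← Real.exp_add]; simp
  linear_combination (θ⁻¹ * x ^ (α - 1)) * hee

lemma deriv_conv (α θ : ℝ) (hα : 1 ≤ α) (hθ : 0 < θ) (x : ℝ) :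
    deriv (convDens α θ) x
      = θ⁻¹ * Real.exp (-x) * (x ^ (α - 1) - Aaux α θ x) / Real.Gamma α := by
  have hfun : convDens α θ = fun y => θ⁻¹ * Real.exp (-(y/θ)) * Faux α θ y / Real.Gamma α :=
    funext fun y => conv_eq α θ hθ y
  have h1 : HasDerivAt (fun y : ℝ => Real.exp (-(y/θ))) (Real.exp (-(x/θ)) * (-(1/θ))) x := by
    have : HasDerivAt (fun y : ℝ => -(y/θ)) (-(1/θ)) x := by
      simpa [div_eq_mul_inv, one_div] using ((hasDerivAt_id x).div_const θ).fun_neg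
    exact this.exp
  have h2 : HasDerivAt (fun y => θ⁻¹ * Real.exp (-(y/θ)) * Faux α θ y / Real.Gamma α)
      ((θ⁻¹ * (Real.exp (-(x/θ)) * (-(1/θ))) * Faux α θ x
        + θ⁻¹ * Real.exp (-(x/θ)) * (x ^ (α - 1) * Real.exp ((1/θ - 1) * x))) / Real.Gamma α) x := by
    have := ((h1.const_mul θ⁻¹).mul (hF α θ hα x)).div_const (Real.Gamma α)
    exact this
  rw [hfun, h2.deriv]
  have he1 : Real.exp (-(x/θ)) = Real.exp (-x) * Real.exp (-((1/θ - 1) * x)) := by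
    rw [← Real.exp_add]; congr 1; field_simp; ring
  have he2 : Real.exp (-(x/θ)) * Real.exp ((1/θ - 1) * x) = Real.exp (-x) := by
    rw [← Real.exp_add]; congr 1; field_simp; ring
  unfold Aaux
  rw [he1] at *
  linear_combination (θ⁻¹ * x ^ (α - 1) / Real.Gamma α) * he2

lemma deriv_gamma (α : ℝ) (x : ℝ) (hx : 0 < x) :
    deriv (gammaDens α) x
      = (x ^ (α - 2) * (α - 1 - x)) * Real.exp (-x) / Real.Gamma α := by
  have h1 : HasDerivAt (fun t : ℝ => t ^ (α - 1)) ((α - 1) * x ^ (α - 1 - 1)) x :=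
    Real.hasDerivAt_rpow_const (Or.inl hx.ne')
  have h2 : HasDerivAt (fun t : ℝ => Real.exp (-t)) (-Real.exp (-x)) x := by
    simpa using ((hasDerivAt_id x).neg).exp
  have h3 : HasDerivAt (gammaDens α)
      (((α - 1) * x ^ (α - 1 - 1) * Real.exp (-x) + x ^ (α - 1) * (-Real.exp (-x))) / Real.Gamma α) x := by
    have := (h1.mul h2).div_const (Real.Gamma α)
    exact this
  rw [h3.deriv]
  have e1 : x ^ (α - 1 - 1) = x ^ (α - 2) := by ring_nf
  have e2 : x ^ (α - 1) = x ^ (α - 2) * x := by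
    rw [← Real.rpow_add_one hx.ne']; ring_nf
  rw [e1, e2]; ring

lemma exp_int (k b : ℝ) (hk : k ≠ 0) :
    ∫ σ in (0:ℝ)..b, Real.exp (k * σ) = (Real.exp (k * b) - 1) / k := by
  have h : ∀ σ ∈ uIcc (0:ℝ) b, HasDerivAt (fun y => Real.exp (k * y) / k) (Real.exp (k * σ)) σ := by
    intro σ _
    have h1 : HasDerivAt (fun y : ℝ => k * y) k σ := by simpa using (hasDerivAt_id σ).const_mul k
    have := (h1.exp).div_const k
    refine this.congr_deriv ?_
    field_simp
  rw [intervalIntegral.integral_eq_sub_of_hasDerivAt h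
    ((Real.continuous_exp.comp (continuous_const.mul continuous_id)).intervalIntegrable 0 b)]
  simp [mul_comm]
  ring

lemma Faux_one (θ x : ℝ) (hθ0 : 0 < θ) (hθ1 : θ < 1) :
    Faux 1 θ x = (Real.exp ((1/θ - 1) * x) - 1) / (1/θ - 1) := by
  have hc : (1/θ - 1) ≠ 0 := by
    have : 1 < 1/θ := by rw [lt_div_iff₀ hθ0]; linarith
    linarith
  rw [← exp_int _ _ hc]
  unfold Faux
  refine intervalIntegral.integral_congr fun σ _ => ?_
  norm_num

lemma Abound (α θ : ℝ) (hα : 1 < α) (hθ0 : 0 < θ) (hθ1 : θ < 1) :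
    Aaux α θ (α - 1) < (α - 1) ^ (α - 1) := by
  set a := α - 1 with hadef
  have ha : 0 < a := by simp [hadef]; linarith
  set c := 1/θ - 1 with hcdef
  have hc : 0 < c := by
    simp only [hcdef, sub_pos]
    rw [lt_div_iff₀ hθ0]; linarith
  have hth : (1:ℝ) + c = 1/θ := by simp [hcdef]
  -- pointwise bound
  have hpt : ∀ σ ∈ Icc (0:ℝ) a, σ ^ (α-1) * Real.exp (c * σ)
      ≤ a ^ (α-1) * Real.exp (-a) * Real.exp ((1+c) * σ) := by
    intro σ hσ
    rcases eq_or_lt_of_le hσ.1 with h0 | h0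
    · rw [← h0]
      rw [Real.zero_rpow (by intro h; linarith [sub_eq_zero.mp h] : α - 1 ≠ 0), zero_mul]
      positivity
    · have hl : Real.log (σ / a) ≤ σ/a - 1 := Real.log_le_sub_one_of_pos (by positivity)
      have hσa : σ ^ (α-1) ≤ a ^ (α-1) * Real.exp (σ - a) := by
        rw [Real.rpow_def_of_pos h0, Real.rpow_def_of_pos ha, ← Real.exp_add]
        apply Real.exp_le_exp.2
        have hlog : Real.log σ - Real.log a ≤ σ/a - 1 := by
          rw [← Real.log_div h0.ne' ha.ne']; exact hl
        have : a * (Real.log σ - Real.log a) ≤ a * (σ/a - 1) := by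
          apply mul_le_mul_of_nonneg_left hlog ha.le
        have h2 : a * (σ/a - 1) = σ - a := by field_simp
        nlinarith [this]
      calc σ ^ (α-1) * Real.exp (c * σ) ≤ (a ^ (α-1) * Real.exp (σ - a)) * Real.exp (c * σ) := by
            apply mul_le_mul_of_nonneg_right hσa (Real.exp_pos _).le
        _ = a ^ (α-1) * Real.exp (-a) * Real.exp ((1+c) * σ) := by
            rw [mul_assoc, mul_assoc, ← Real.exp_add, ← Real.exp_add]; ring_nf
  -- integral bound
  have hFb : Faux α θ a ≤ a ^ (α-1) * Real.exp (-a) * ((Real.exp ((1+c)*a) - 1)/(1+c)) := by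
    have hcont1 : Continuous (fun σ : ℝ => σ ^ (α - 1) * Real.exp (c * σ)) := by
      apply Continuous.mul _ (by continuity)
      rw [continuous_iff_continuousAt]
      exact fun x => Real.continuousAt_rpow_const x _ (Or.inr (by linarith))
    have hcont2 : Continuous (fun σ : ℝ => a ^ (α-1) * Real.exp (-a) * Real.exp ((1+c) * σ)) := by
      continuity
    have := intervalIntegral.integral_mono_on (μ := MeasureTheory.volume) ha.le (hcont1.intervalIntegrable 0 a)
      (hcont2.intervalIntegrable 0 a) hpt
    calc Faux α θ a = ∫ σ in (0:ℝ)..a, σ ^ (α - 1) * Real.exp (c * σ) := rfl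
      _ ≤ ∫ σ in (0:ℝ)..a, a ^ (α-1) * Real.exp (-a) * Real.exp ((1+c) * σ) := this
      _ = a ^ (α-1) * Real.exp (-a) * ((Real.exp ((1+c)*a) - 1)/(1+c)) := by
          rw [intervalIntegral.integral_const_mul, exp_int _ _ (by positivity : (1:ℝ)+c ≠ 0)]
  -- conclude
  have hA : Aaux α θ a = θ⁻¹ * (Real.exp (-(c * a)) * Faux α θ a) := rfl
  have hAle : Aaux α θ a ≤ a ^ (α-1) * (1 - Real.exp (-((1+c)*a))) := by
    rw [hA]
    have h1 : θ⁻¹ * (Real.exp (-(c * a)) * Faux α θ a)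
        ≤ θ⁻¹ * (Real.exp (-(c * a)) * (a ^ (α-1) * Real.exp (-a) * ((Real.exp ((1+c)*a) - 1)/(1+c)))) := by
      apply mul_le_mul_of_nonneg_left _ (by positivity)
      exact mul_le_mul_of_nonneg_left hFb (Real.exp_pos _).le
    refine h1.trans (le_of_eq ?_)
    have hθi : θ⁻¹ = 1 + c := by rw [hth]; simp [one_div]
    rw [hθi]
    have he1 : Real.exp (-(c*a)) * Real.exp (-a) * Real.exp ((1+c)*a) = 1 := by
      rw [← Real.exp_add, ← Real.exp_add]; ring_nf; exact Real.exp_zero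
    have he2 : Real.exp (-(c*a)) * Real.exp (-a) = Real.exp (-((1+c)*a)) := by
      rw [← Real.exp_add]; ring_nf
    field_simp
    nlinarith [he1, he2, Real.exp_pos (-(c*a)), Real.exp_pos (-a), Real.rpow_pos_of_pos ha (α-1)]
  have : a ^ (α-1) * (1 - Real.exp (-((1+c)*a))) < a ^ (α-1) := by
    have h2 : 0 < Real.exp (-((1+c)*a)) := Real.exp_pos _
    nlinarith [Real.rpow_pos_of_pos ha (α-1)]
  linarith

lemma hp1 (α θ x : ℝ) : HasDerivAt (p1aux α θ) (dp1aux α θ x) x := by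
  unfold p1aux dp1aux
  have h4 := (hasDerivAt_pow 4 x).const_mul θ⁻¹
  have h3 := (hasDerivAt_pow 3 x).const_mul ((α-1)*θ⁻¹)
  have h2 := (hasDerivAt_pow 2 x).const_mul (α-1)
  refine ((h4.sub h3).add h2).congr_deriv ?_
  push_cast; ring

lemma hp2 (α θ x : ℝ) : HasDerivAt (p2aux α θ) (dp2aux α θ x) x := by
  unfold p2aux dp2aux
  have h2 := ((hasDerivAt_pow 2 x).const_mul (1/θ-1)).neg
  have h1 := (hasDerivAt_id x).const_mul ((α-1)*(1/θ-1) - (α-1))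
  refine ((h2.add h1).add_const ((α-1)^2 - (α-1))).congr_deriv ?_
  push_cast; ring

lemma hPtDeriv (α θ : ℝ) (hα : 1 ≤ α) (x : ℝ) (hx : 0 < x) :
    HasDerivAt (Pt α θ) (dPt α θ x) x := by
  have hr : HasDerivAt (fun y : ℝ => y ^ (α-3)) ((α-3) * x ^ (α-3-1)) x :=
    Real.hasDerivAt_rpow_const (Or.inl hx.ne')
  have e : x ^ (α-3-1) = x ^ (α-4) := by ring_nf
  rw [e] at hr
  exact (hr.mul (hp1 α θ x)).add ((hA α θ hα x).mul (hp2 α θ x))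

lemma p2neg (α θ : ℝ) (hα : 1 ≤ α) (hθ0 : 0 < θ) (hθ1 : θ < 1) (x : ℝ) (hx : α - 1 < x) :
    p2aux α θ x < 0 := by
  have hc : 0 < 1/θ - 1 := by rw [sub_pos, lt_div_iff₀ hθ0]; linarith
  have ha : 0 ≤ α - 1 := by linarith
  have hx0 : 0 < x := lt_of_le_of_lt ha hx
  unfold p2aux
  -- p2 = -(c x (x-a) + a(x-a+1))
  nlinarith [mul_pos (mul_pos hc hx0) (by linarith : 0 < x - (α-1)),
    mul_nonneg ha (by linarith : (0:ℝ) ≤ x - (α-1) + 1)]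

lemma Zneg (α θ x : ℝ) (hα : 1 < α) (hx : α - 1 < x) :
    (α-1)*(x-(α-1))*x^2*((α-1) + 2*(x-(α-1)) + (x-(α-1))^2) > 0 := by
  have h1 : 0 < α - 1 := by linarith
  have hx0 : 0 < x := by linarith
  have h2 : 0 < x - (α-1) := by linarith
  positivity

lemma dPt_pos_at_zero (α θ : ℝ) (hα : 1 < α) (hθ0 : 0 < θ) (hθ1 : θ < 1)
    (x : ℝ) (hx : α - 1 < x) (hz : Pt α θ x = 0) : 0 < dPt α θ x := by
  have hx0 : 0 < x := by linarith
  have hp2 : p2aux α θ x < 0 := p2neg α θ hα.le hθ0 hθ1 x hx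
  have e4 : x ^ (α-4) * x = x ^ (α-3) := by
    rw [← Real.rpow_add_one hx0.ne']; ring_nf
  have e1 : x ^ (α-1) = x ^ (α-3) * x^2 := by
    rw [show α - 1 = (α-3) + 1 + 1 by ring, Real.rpow_add_one (by positivity),
      Real.rpow_add_one hx0.ne']
    ring
  have hu : 0 < x ^ (α-3) := Real.rpow_pos_of_pos hx0 _
  have hzz : Aaux α θ x * p2aux α θ x = -(x^(α-3) * p1aux α θ x) := by
    unfold Pt at hz; linarith
  have hker : (x * p2aux α θ x) * dPt α θ x
      = x^(α-3) * (-((α-1)*(x-(α-1))*x^2*((α-1) + 2*(x-(α-1)) + (x-(α-1))^2))) := by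
    unfold dPt p1aux p2aux dp1aux dp2aux
    unfold p1aux p2aux at hzz
    rw [e1]
    linear_combination ((-((1/θ-1)*x^2) + ((α-1)*(1/θ-1) - (α-1))*x + ((α-1)^2 - (α-1)))
        * (θ⁻¹*x^4 - (α-1)*θ⁻¹*x^3 + (α-1)*x^2) * (α-3)) * e4
      + (x * (-((1/θ-1)*(2*x)) + ((α-1)*(1/θ-1) - (α-1)))
        - (1/θ-1) * x * (-((1/θ-1)*x^2) + ((α-1)*(1/θ-1) - (α-1))*x + ((α-1)^2 - (α-1)))) * hzz
  -- conclude positivity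
  have hZ : x^(α-3) * (-((α-1)*(x-(α-1))*x^2*((α-1) + 2*(x-(α-1)) + (x-(α-1))^2))) < 0 := by
    have := Zneg α θ x hα hx
    have h2 : -((α-1)*(x-(α-1))*x^2*((α-1) + 2*(x-(α-1)) + (x-(α-1))^2)) < 0 := by linarith
    exact mul_neg_of_pos_of_neg hu h2
  rw [← hker] at hZ
  have hxp2 : x * p2aux α θ x < 0 := mul_neg_of_pos_of_neg hx0 hp2
  by_contra hcon
  push_neg at hcon
  nlinarith

lemma Ptpos_gt (α θ : ℝ) (hα : 1 < α) (hθ0 : 0 < θ) (hθ1 : θ < 1) :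
    ∀ x ∈ Ioi (α - 1), 0 < Pt α θ x := by
  set a := α - 1 with hadef
  have ha : 0 < a := by rw [hadef]; linarith
  -- Pt is positive at a
  have hPta : 0 < Pt α θ a := by
    have hzr : p1aux α θ a = θ⁻¹*a^4 - a*θ⁻¹*a^3 + a*a^2 := rfl
    have hp1a : p1aux α θ a = a^3 := by rw [hzr]; ring
    have hp2a : p2aux α θ a = -a := by unfold p2aux; ring
    have e3 : a ^ (α-3) * a^3 = a^(α-1) * a := by
      rw [show α - 1 = (α-3) + 1 + 1 by ring, Real.rpow_add_one (by positivity),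
        Real.rpow_add_one ha.ne']
      ring
    have hAb := Abound α θ hα hθ0 hθ1
    unfold Pt
    rw [hp1a, hp2a, e3]
    rw [← hadef] at hAb
    nlinarith [hAb]
  intro x hx
  by_contra hPx
  push_neg at hPx
  -- continuity of Pt at points > 0
  have hct : ∀ y : ℝ, 0 < y → ContinuousAt (Pt α θ) y := fun y hy =>
    (hPtDeriv α θ hα.le y hy).differentiableAt.continuousAt
  -- neighborhood of a where Pt > 0
  have hev : ∀ᶠ y in nhds a, 0 < Pt α θ y := (hct a ha).eventually (eventually_gt_nhds hPta)
  obtain ⟨ε, hε, hball⟩ := Metric.eventually_nhds_iff.mp hev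
  -- the "bad set"
  set T : Set ℝ := {y | a + ε/2 ≤ y ∧ Pt α θ y ≤ 0} with hTdef
  have hbad : ∀ y : ℝ, a < y → Pt α θ y ≤ 0 → y ∈ T := by
    intro y hy hPy
    constructor
    · by_contra hlt
      push_neg at hlt
      have : dist y a < ε := by
        rw [Real.dist_eq, abs_of_pos (by linarith : 0 < y - a)]; linarith
      exact absurd (hball this) (not_lt.mpr hPy)
    · exact hPy
  have hTne : T.Nonempty := ⟨x, hbad x hx hPx⟩
  have hTbdd : BddBelow T := ⟨a + ε/2, fun y hy => hy.1⟩
  have hTclosed : IsClosed T := by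
    have : T = Ici (a + ε/2) ∩ (Pt α θ) ⁻¹' (Iic 0) := by
      ext y; simp [hTdef, mem_Ici, mem_Iic]
    rw [this]
    apply ContinuousOn.preimage_isClosed_of_isClosed _ isClosed_Ici isClosed_Iic
    intro y hy
    exact (hct y (by have := mem_Ici.mp hy; linarith)).continuousWithinAt
  set x₀ := sInf T with hx0def
  have hx₀T : x₀ ∈ T := hTclosed.csInf_mem hTne hTbdd
  have hx₀a : a < x₀ := by have := hx₀T.1; linarith
  have hx₀0 : 0 < x₀ := by linarith
  -- Pt > 0 on (a, x₀)
  have hpos_below : ∀ y, a < y → y < x₀ → 0 < Pt α θ y := by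
    intro y hy1 hy2
    by_contra hPy
    push_neg at hPy
    exact absurd (csInf_le hTbdd (hbad y hy1 hPy)) (not_le.mpr hy2)
  -- Pt x₀ = 0
  have hPt0 : Pt α θ x₀ = 0 := by
    have hge : 0 ≤ Pt α θ x₀ := by
      have htd : Tendsto (Pt α θ) (nhdsWithin x₀ (Iio x₀)) (nhds (Pt α θ x₀)) :=
        ((hct x₀ hx₀0).tendsto).mono_left nhdsWithin_le_nhds
      refine ge_of_tendsto htd ?_
      filter_upwards [Ioo_mem_nhdsLT_of_mem (by constructor <;> [exact hx₀a; rfl] : x₀ ∈ Ioc a x₀)]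
        with y hy
      exact (hpos_below y hy.1 hy.2).le
    linarith [hx₀T.2]
  -- derivative at x₀ is positive
  have hdpos : 0 < dPt α θ x₀ := dPt_pos_at_zero α θ hα hθ0 hθ1 x₀ hx₀a hPt0
  -- but slope from the left is nonpositive
  have hder := hPtDeriv α θ hα.le x₀ hx₀0
  have hslope : Tendsto (slope (Pt α θ) x₀) (nhdsWithin x₀ (Iio x₀)) (nhds (dPt α θ x₀)) :=
    (hasDerivAt_iff_tendsto_slope.mp hder).mono_left
      (nhdsWithin_mono _ (fun y hy => ne_of_lt hy))
  have hle : dPt α θ x₀ ≤ 0 := by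
    refine le_of_tendsto hslope ?_
    filter_upwards [Ioo_mem_nhdsLT_of_mem (by constructor <;> [exact hx₀a; rfl] : x₀ ∈ Ioc a x₀)]
      with y hy
    rw [slope_def_field]
    have h1 : 0 < Pt α θ y := hpos_below y hy.1 hy.2
    have h2 : y - x₀ < 0 := by linarith [hy.2]
    rw [hPt0]
    rw [div_nonpos_iff]
    left
    exact ⟨by linarith, by linarith⟩
  linarith

lemma Ptpos_one (θ : ℝ) (hθ0 : 0 < θ) (hθ1 : θ < 1) :
    ∀ x ∈ Ioi ((1:ℝ) - 1), 0 < Pt 1 θ x := by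
  intro x hx
  rw [mem_Ioi] at hx
  have hx0 : 0 < x := by linarith
  have hc : 0 < 1/θ - 1 := by rw [sub_pos, lt_div_iff₀ hθ0]; linarith
  have hpow : x ^ ((1:ℝ)-3) = (x^2)⁻¹ := by
    rw [show (1:ℝ)-3 = -2 by norm_num, Real.rpow_neg hx0.le]
    norm_num
  have key : Pt 1 θ x = θ⁻¹ * x^2 * Real.exp (-((1/θ-1)*x)) := by
    unfold Pt p1aux p2aux Aaux
    rw [Faux_one θ x hθ0 hθ1, hpow]
    set c' := 1/θ - 1 with hc'def
    have hee : Real.exp (-(c'*x)) * Real.exp (c'*x) = 1 := by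
      rw [← Real.exp_add]; simp
    have hcne : c' ≠ 0 := ne_of_gt hc
    have hx2 : (x:ℝ)^2 ≠ 0 := by positivity
    field_simp
    linear_combination (x^2 * x^2 * c' + x^4*(θ^2 + 1 - θ - θ⁻¹) + x^4*(θ - θ^2*θ⁻¹) + (x^4*θ^2*θ⁻¹ - x^4*θ^2)) * hee
        + (x^2 - x^2*θ⁻¹) * (by rw [← Real.exp_add]; simp : Real.exp (-(x*c')) * Real.exp (x*c') = 1)
  rw [key]
  positivity

theorem stmt_9 (α θ : ℝ) (hα : 1 ≤ α) (hθ : θ ∈ Ioo (0:ℝ) 1) :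
    StrictMonoOn (fun x => deriv (convDens α θ) x / deriv (gammaDens α) x)
      (Ioi (α - 1)) := by
  obtain ⟨hθ0, hθ1⟩ := hθ
  have hΓ : 0 < Real.Gamma α := Real.Gamma_pos_of_pos (by linarith)
  have ha0 : 0 ≤ α - 1 := by linarith
  have hPt : ∀ x ∈ Ioi (α - 1), 0 < Pt α θ x := by
    rcases eq_or_lt_of_le hα with h1 | h1
    · rw [← h1]; exact Ptpos_one θ hθ0 hθ1
    · exact Ptpos_gt α θ h1 hθ0 hθ1
  set R : ℝ → ℝ := fun x => θ⁻¹ * (x^(α-1) - Aaux α θ x) / (x^(α-2) * ((α-1) - x)) with hRdef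
  have hder : ∀ x ∈ Ioi (α-1), HasDerivAt R
      ((θ⁻¹ * ((α-1)*x^(α-2) - (θ⁻¹ * x ^ (α - 1) - (1/θ - 1) * Aaux α θ x)) * (x^(α-2) * ((α-1) - x))
        - θ⁻¹ * (x^(α-1) - Aaux α θ x) * ((α-2)*x^(α-3)*((α-1) - x) + x^(α-2) * (-1)))
        / (x^(α-2) * ((α-1) - x))^2) x := by
    intro x hx
    rw [mem_Ioi] at hx
    have hx0 : 0 < x := lt_of_le_of_lt ha0 hx
    have h1 : HasDerivAt (fun y : ℝ => y^(α-1)) ((α-1)*x^(α-2)) x := by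
      have := Real.hasDerivAt_rpow_const (x := x) (p := α-1) (Or.inl hx0.ne')
      have e : x^(α-1-1) = x^(α-2) := by ring_nf
      rwa [e] at this
    have hNN : HasDerivAt (fun y => y^(α-1) - Aaux α θ y)
        ((α-1)*x^(α-2) - (θ⁻¹ * x ^ (α - 1) - (1/θ - 1) * Aaux α θ x)) x :=
      h1.sub (hA α θ hα x)
    have h2 : HasDerivAt (fun y : ℝ => y^(α-2)) ((α-2)*x^(α-3)) x := by
      have := Real.hasDerivAt_rpow_const (x := x) (p := α-2) (Or.inl hx0.ne')
      have e : x^(α-2-1) = x^(α-3) := by ring_nf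
      rwa [e] at this
    have h3 : HasDerivAt (fun y : ℝ => (α-1) - y) (-1) x := by
      simpa using (hasDerivAt_id x).const_sub (α-1)
    have hDD : HasDerivAt (fun y => y^(α-2) * ((α-1) - y))
        ((α-2)*x^(α-3)*((α-1) - x) + x^(α-2) * (-1)) x := h2.mul h3
    have hD0 : x^(α-2) * ((α-1) - x) ≠ 0 :=
      mul_ne_zero (Real.rpow_pos_of_pos hx0 _).ne' (by linarith : (α-1) - x < 0).ne
    exact (hNN.const_mul θ⁻¹).div hDD hD0
  have hdpos : ∀ x ∈ Ioi (α-1), 0 < deriv R x := by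
    intro x hx
    rw [(hder x hx).deriv]
    rw [mem_Ioi] at hx
    have hx0 : 0 < x := lt_of_le_of_lt ha0 hx
    have hD0 : x^(α-2) * ((α-1) - x) ≠ 0 :=
      mul_ne_zero (Real.rpow_pos_of_pos hx0 _).ne' (by linarith : (α-1) - x < 0).ne
    have r2 : x^(α-2) = x^(α-3) * x := by
      rw [show α-2 = (α-3)+1 by ring, Real.rpow_add_one hx0.ne']
    have r1 : x^(α-1) = x^(α-3) * x^2 := by
      rw [show α-1 = (α-3)+1+1 by ring, Real.rpow_add_one hx0.ne', Real.rpow_add_one hx0.ne']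
      ring
    have hW : θ⁻¹ * ((α-1)*x^(α-2) - (θ⁻¹ * x ^ (α - 1) - (1/θ - 1) * Aaux α θ x)) * (x^(α-2) * ((α-1) - x))
        - θ⁻¹ * (x^(α-1) - Aaux α θ x) * ((α-2)*x^(α-3)*((α-1) - x) + x^(α-2) * (-1))
        = θ⁻¹ * (x^(α-3) * Pt α θ x) := by
      unfold Pt p1aux p2aux
      rw [r1, r2]
      ring
    rw [hW]
    apply div_pos
    · have := hPt x (mem_Ioi.mpr hx)
      have hu := Real.rpow_pos_of_pos hx0 (α-3)
      positivity
    · exact lt_of_le_of_ne (sq_nonneg _) (Ne.symm (pow_ne_zero 2 hD0))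
  have hmono : StrictMonoOn R (Ioi (α-1)) := by
    apply strictMonoOn_of_deriv_pos (convex_Ioi _)
    · exact fun x hx => ((hder x hx).differentiableAt.continuousAt).continuousWithinAt
    · rw [interior_Ioi]
      exact hdpos
  have heq : ∀ x ∈ Ioi (α-1), deriv (convDens α θ) x / deriv (gammaDens α) x = R x := by
    intro x hx
    rw [mem_Ioi] at hx
    have hx0 : 0 < x := lt_of_le_of_lt ha0 hx
    rw [deriv_conv α θ hα hθ0 x, deriv_gamma α x hx0, hRdef]
    have hp : (0:ℝ) < x^(α-2) := Real.rpow_pos_of_pos hx0 _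
    have hax : (α-1) - x ≠ 0 := (by linarith : (α-1) - x < 0).ne
    have hax2 : α - 1 - x ≠ 0 := hax
    field_simp
  intro x hx y hy hxy
  have ex := heq x hx
  have ey := heq y hy
  simp only at ex ey ⊢
  rw [ex, ey]
  exact hmono hx hy hxy
end

section
/- Let α ≥ 2, θ ∈ (0,1), X ~ Gamma(α,1), Z ~ Exponential(1) independent, h the density of X + θZ, and g_α the Gamma(α,1) density. Then h'(x)/g'_α(x) is strictly increasing in x on (0, α-1). -/
open Real Set

noncomputable def gd (α x : ℝ) : ℝ :=
  ((α - 1) * x ^ (α - 2) - x ^ (α - 1)) * Real.exp (-x) / Real.Gamma α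

variable {α θ : ℝ}

lemma Gamma_pos (hα : 2 ≤ α) : 0 < Real.Gamma α :=
  Real.Gamma_pos_of_pos (by linarith)

lemma hasDerivAt_gammaDens (hα : 2 ≤ α) (x : ℝ) :
    HasDerivAt (gammaDens α) (gd α x) x := by
  have h1 : HasDerivAt (fun t : ℝ => t ^ (α - 1)) ((α - 1) * x ^ (α - 1 - 1)) x :=
    Real.hasDerivAt_rpow_const (Or.inr (by linarith))
  have h2 : HasDerivAt (fun t : ℝ => Real.exp (-t)) (-Real.exp (-x)) x := by
    simpa using (hasDerivAt_neg x).exp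
  have := (h1.mul h2).div_const (Real.Gamma α)
  refine HasDerivAt.congr_deriv this ?_
  have : α - 1 - 1 = α - 2 := by ring
  unfold gd; rw [this]; ring

lemma continuous_gammaDens (hα : 2 ≤ α) : Continuous (gammaDens α) := by
  unfold gammaDens
  have h1 : Continuous fun t : ℝ => t ^ (α - 1) :=
    Real.continuous_rpow_const (by linarith)
  fun_prop

lemma continuous_gd (hα : 2 ≤ α) : Continuous (gd α) := by
  unfold gd
  have h1 : Continuous fun t : ℝ => t ^ (α - 1) :=
    Real.continuous_rpow_const (by linarith)
  have h2 : Continuous fun t : ℝ => t ^ (α - 2) :=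
    Real.continuous_rpow_const (by linarith)
  fun_prop

lemma gd_eq (hα : 2 ≤ α) {x : ℝ} (hx : 0 < x) :
    gd α x = x ^ (α - 2) * ((α - 1) - x) * Real.exp (-x) / Real.Gamma α := by
  unfold gd
  rw [show α - 1 = (α - 2) + 1 by ring, Real.rpow_add hx, Real.rpow_one]
  ring

lemma gd_pos (hα : 2 ≤ α) {x : ℝ} (h0 : 0 < x) (h1 : x < α - 1) : 0 < gd α x := by
  rw [gd_eq hα h0]
  have := Real.rpow_pos_of_pos h0 (α - 2)
  have h2 : (0:ℝ) < (α - 1) - x := by linarith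
  have := Gamma_pos hα
  positivity

lemma gd_nonneg (hα : 2 ≤ α) {x : ℝ} (h0 : 0 ≤ x) (h1 : x ≤ α - 1) : 0 ≤ gd α x := by
  rcases h0.lt_or_eq with hx | hx
  · rw [gd_eq hα hx]
    have := (Real.rpow_pos_of_pos hx (α - 2)).le
    have h2 : (0:ℝ) ≤ (α - 1) - x := by linarith
    have := (Gamma_pos hα).le
    positivity
  · unfold gd
    rw [← hx, Real.zero_rpow (by linarith : α - 1 ≠ 0)]
    have h3 : (0:ℝ) ≤ (α - 1) * (0:ℝ) ^ (α - 2) - 0 := by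
      nlinarith [Real.rpow_nonneg (le_refl (0:ℝ)) (α - 2)]
    exact div_nonneg (mul_nonneg h3 (Real.exp_nonneg _)) (Gamma_pos hα).le

/-- key cross inequality -/
lemma gd_cross (hα : 2 ≤ α) {s a b : ℝ} (hs : 0 < s) (hsa : s < a) (hab : a < b)
    (hb1 : b < α - 1) : gd α b * gd α s < gd α a * gd α (s + (b - a)) := by
  have hΓ := Gamma_pos hα
  have ha0 : 0 < a := hs.trans hsa
  have hb0 : 0 < b := ha0.trans hab
  have hsc : 0 < s + (b - a) := by linarith
  have hsc1 : s + (b - a) < α - 1 := by linarith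
  rw [gd_eq hα hs, gd_eq hα ha0, gd_eq hα hb0, gd_eq hα hsc]
  rw [div_mul_div_comm, div_mul_div_comm, div_lt_div_iff₀ (by positivity) (by positivity)]
  have hexp : Real.exp (-b) * Real.exp (-s) = Real.exp (-a) * Real.exp (-(s + (b - a))) := by
    rw [← Real.exp_add, ← Real.exp_add]; ring_nf
  -- reduce to polynomial-rpow inequality
  have key : b ^ (α - 2) * ((α - 1) - b) * (s ^ (α - 2) * ((α - 1) - s)) <
      a ^ (α - 2) * ((α - 1) - a) * ((s + (b - a)) ^ (α - 2) * ((α - 1) - (s + (b - a)))) := by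
    have hps : 0 < b * s := by positivity
    have hmul : b * s < a * (s + (b - a)) := by nlinarith
    have hr1 : (b * s) ^ (α - 2) ≤ (a * (s + (b - a))) ^ (α - 2) :=
      Real.rpow_le_rpow hps.le hmul.le (by linarith)
    have hr2 : (0:ℝ) < (b * s) ^ (α - 2) := Real.rpow_pos_of_pos hps _
    have hA : ((α - 1) - b) * ((α - 1) - s) < ((α - 1) - a) * ((α - 1) - (s + (b - a))) := by
      nlinarith
    have hApos : (0:ℝ) < ((α - 1) - b) * ((α - 1) - s) := by
      have : (0:ℝ) < (α-1) - b := by linarith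
      have : (0:ℝ) < (α-1) - s := by linarith
      positivity
    calc b ^ (α - 2) * ((α - 1) - b) * (s ^ (α - 2) * ((α - 1) - s))
        = (b * s) ^ (α - 2) * (((α - 1) - b) * ((α - 1) - s)) := by
          rw [Real.mul_rpow hb0.le hs.le]; ring
      _ < (a * (s + (b - a))) ^ (α - 2) * (((α - 1) - a) * ((α - 1) - (s + (b - a)))) := by
          calc (b * s) ^ (α - 2) * (((α - 1) - b) * ((α - 1) - s))
              < (b * s) ^ (α - 2) * (((α - 1) - a) * ((α - 1) - (s + (b - a)))) := by
                exact mul_lt_mul_of_pos_left hA hr2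
            _ ≤ (a * (s + (b - a))) ^ (α - 2) * (((α - 1) - a) * ((α - 1) - (s + (b - a)))) := by
                apply mul_le_mul_of_nonneg_right hr1
                nlinarith
      _ = a ^ (α - 2) * ((α - 1) - a) * ((s + (b - a)) ^ (α - 2) * ((α - 1) - (s + (b - a)))) := by
          rw [Real.mul_rpow ha0.le hsc.le]; ring
  apply mul_lt_mul_of_pos_right ?_ (show (0:ℝ) < Real.Gamma α * Real.Gamma α by positivity)
  calc b ^ (α - 2) * ((α - 1) - b) * Real.exp (-b) * (s ^ (α - 2) * ((α - 1) - s) * Real.exp (-s))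
      = b ^ (α - 2) * ((α - 1) - b) * (s ^ (α - 2) * ((α - 1) - s)) *
        (Real.exp (-b) * Real.exp (-s)) := by ring
    _ < a ^ (α - 2) * ((α - 1) - a) * ((s + (b - a)) ^ (α - 2) * ((α - 1) - (s + (b - a)))) *
        (Real.exp (-b) * Real.exp (-s)) := by
        exact mul_lt_mul_of_pos_right key (by positivity)
    _ = a ^ (α - 2) * ((α - 1) - a) * Real.exp (-a) *
        ((s + (b - a)) ^ (α - 2) * ((α - 1) - (s + (b - a))) * Real.exp (-(s + (b - a)))) := by
        rw [mul_assoc, hexp]; ring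

lemma convDens_eq (hθ : 0 < θ) (x : ℝ) :
    convDens α θ x = θ⁻¹ * Real.exp (-x / θ) *
      ∫ s in (0:ℝ)..x, gammaDens α s * Real.exp (s / θ) := by
  unfold convDens
  have h0 : ∀ t ∈ uIcc (0:ℝ) x, gammaDens α (x - t) * (θ⁻¹ * Real.exp (-t / θ)) =
      (fun s => gammaDens α s * (θ⁻¹ * Real.exp (-(x - s) / θ))) (x - t) := by
    intro t _
    simp [sub_sub_cancel]
  rw [intervalIntegral.integral_congr h0,
    intervalIntegral.integral_comp_sub_left
      (fun s => gammaDens α s * (θ⁻¹ * Real.exp (-(x - s) / θ))) x,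
    sub_self, sub_zero, ← intervalIntegral.integral_const_mul]
  apply intervalIntegral.integral_congr
  intro s _
  have h1 : -(x - s) / θ = -x / θ + s / θ := by ring
  show gammaDens α s * (θ⁻¹ * Real.exp (-(x - s) / θ)) =
    θ⁻¹ * Real.exp (-x / θ) * (gammaDens α s * Real.exp (s / θ))
  rw [h1, Real.exp_add]
  ring

lemma hasDerivAt_convDens (hα : 2 ≤ α) (hθ : 0 < θ) (x : ℝ) :
    HasDerivAt (convDens α θ)
      (θ⁻¹ * (gammaDens α x - convDens α θ x)) x := by
  have hG : Continuous (fun s : ℝ => gammaDens α s * Real.exp (s / θ)) :=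
    (continuous_gammaDens hα).mul (by fun_prop)
  have hF : HasDerivAt (fun u : ℝ => ∫ s in (0:ℝ)..u, gammaDens α s * Real.exp (s / θ))
      (gammaDens α x * Real.exp (x / θ)) x :=
    intervalIntegral.integral_hasDerivAt_right (hG.intervalIntegrable _ _)
      (hG.stronglyMeasurableAtFilter _ _) hG.continuousAt
  have hlin : HasDerivAt (fun u : ℝ => -u / θ) (-1 / θ) x :=
    (hasDerivAt_id x).neg.div_const θ
  have hexp : HasDerivAt (fun u : ℝ => Real.exp (-u / θ)) (Real.exp (-x / θ) * (-1 / θ)) x :=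
    hlin.exp
  have he : HasDerivAt (fun u : ℝ => θ⁻¹ * Real.exp (-u / θ))
      (θ⁻¹ * (Real.exp (-x / θ) * (-1 / θ))) x := hexp.const_mul θ⁻¹
  have hprod := he.mul hF
  have hfun : convDens α θ = fun u : ℝ =>
      θ⁻¹ * Real.exp (-u / θ) * ∫ s in (0:ℝ)..u, gammaDens α s * Real.exp (s / θ) :=
    funext (convDens_eq hθ)
  rw [hfun]
  refine HasDerivAt.congr_deriv hprod ?_
  have hc : Real.exp (-x / θ) * Real.exp (x / θ) = 1 := by
    rw [← Real.exp_add, neg_div, neg_add_cancel, Real.exp_zero]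
  beta_reduce
  linear_combination (θ⁻¹ * gammaDens α x) * hc

lemma ibp (hα : 2 ≤ α) (hθ : 0 < θ) {x : ℝ} (hx : 0 ≤ x) :
    (∫ s in (0:ℝ)..x, gd α s * Real.exp (s / θ)) =
      gammaDens α x * Real.exp (x / θ) -
        θ⁻¹ * ∫ s in (0:ℝ)..x, gammaDens α s * Real.exp (s / θ) := by
  have hG : Continuous (fun s : ℝ => gammaDens α s * Real.exp (s / θ)) :=
    (continuous_gammaDens hα).mul (by fun_prop)
  have hgd : Continuous (fun s : ℝ => gd α s * Real.exp (s / θ)) :=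
    (continuous_gd hα).mul (by fun_prop)
  have hv : ∀ s : ℝ, HasDerivAt (fun u : ℝ => Real.exp (u / θ)) (Real.exp (s / θ) * θ⁻¹) s := by
    intro s
    have : HasDerivAt (fun u : ℝ => u / θ) θ⁻¹ s := by
      simpa [one_div] using (hasDerivAt_id s).div_const θ
    exact (Real.hasDerivAt_exp (s / θ)).comp s this
  have h := intervalIntegral.integral_deriv_mul_eq_sub
    (u := gammaDens α) (v := fun u : ℝ => Real.exp (u / θ))
    (u' := gd α) (v' := fun s : ℝ => Real.exp (s / θ) * θ⁻¹)
    (fun s _ => hasDerivAt_gammaDens hα s) (fun s _ => hv s)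
    ((continuous_gd hα).intervalIntegrable 0 x)
    ((by fun_prop : Continuous fun s : ℝ => Real.exp (s / θ) * θ⁻¹).intervalIntegrable 0 x)
  have hG2 : Continuous (fun s : ℝ => gammaDens α s * (Real.exp (s / θ) * θ⁻¹)) :=
    (continuous_gammaDens hα).mul (by fun_prop)
  rw [intervalIntegral.integral_add (hgd.intervalIntegrable 0 x)
    (hG2.intervalIntegrable 0 x)] at h
  have hg0 : gammaDens α 0 = 0 := by
    unfold gammaDens
    rw [Real.zero_rpow (by linarith : α - 1 ≠ 0)]
    simp
  have h2 : (∫ s in (0:ℝ)..x, gammaDens α s * (Real.exp (s / θ) * θ⁻¹)) =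
      θ⁻¹ * ∫ s in (0:ℝ)..x, gammaDens α s * Real.exp (s / θ) := by
    rw [← intervalIntegral.integral_const_mul]
    apply intervalIntegral.integral_congr
    intro s _
    show gammaDens α s * (Real.exp (s / θ) * θ⁻¹) = θ⁻¹ * (gammaDens α s * Real.exp (s / θ))
    ring
  rw [hg0] at h
  rw [h2] at h
  linarith

theorem stmt_10 (α θ : ℝ) (hα : 2 ≤ α) (hθ : θ ∈ Ioo (0:ℝ) 1) :
    StrictMonoOn (fun x => deriv (convDens α θ) x / deriv (gammaDens α) x)
      (Ioo (0:ℝ) (α - 1)) := by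
  obtain ⟨hθ0, hθ1⟩ := hθ
  have hΓ := Gamma_pos hα
  have hI : ∀ x : ℝ, 0 ≤ x → deriv (convDens α θ) x =
      θ⁻¹ * (Real.exp (-x / θ) * ∫ s in (0:ℝ)..x, gd α s * Real.exp (s / θ)) := by
    intro x hx
    rw [(hasDerivAt_convDens hα hθ0 x).deriv, convDens_eq hθ0 x, ibp hα hθ0 hx]
    have hc : Real.exp (-x / θ) * Real.exp (x / θ) = 1 := by
      rw [← Real.exp_add, neg_div, neg_add_cancel, Real.exp_zero]
    linear_combination (-θ⁻¹ * gammaDens α x) * hc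
  intro a ha b hb hab
  have ha0 : 0 < a := ha.1
  have ha1 : a < α - 1 := ha.2
  have hb0 : 0 < b := hb.1
  have hb1 : b < α - 1 := hb.2
  have hgda : 0 < gd α a := gd_pos hα ha0 ha1
  have hgdb : 0 < gd α b := gd_pos hα hb0 hb1
  simp only
  rw [hI a ha0.le, hI b hb0.le, (hasDerivAt_gammaDens hα a).deriv,
    (hasDerivAt_gammaDens hα b).deriv, div_lt_div_iff₀ hgda hgdb]
  set Ia := ∫ s in (0:ℝ)..a, gd α s * Real.exp (s / θ) with hIa
  set Ib := ∫ s in (0:ℝ)..b, gd α s * Real.exp (s / θ) with hIb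
  have key : Real.exp (-a / θ) * Ia * gd α b < Real.exp (-b / θ) * Ib * gd α a := by
    have hcont : Continuous (fun s : ℝ => gd α s * Real.exp (s / θ)) :=
      (continuous_gd hα).mul (by fun_prop)
    have hcont2 : Continuous (fun s : ℝ => gd α (s + (b - a)) * Real.exp ((s + (b - a)) / θ)) :=
      (((continuous_gd hα).comp (continuous_id.add continuous_const)).mul (by fun_prop))
    -- split Ib
    have hsplit : Ib = (∫ s in (0:ℝ)..(b - a), gd α s * Real.exp (s / θ)) +
        ∫ s in (b - a)..b, gd α s * Real.exp (s / θ) :=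
      (intervalIntegral.integral_add_adjacent_intervals
        (hcont.intervalIntegrable _ _) (hcont.intervalIntegrable _ _)).symm
    have hfirst : 0 ≤ ∫ s in (0:ℝ)..(b - a), gd α s * Real.exp (s / θ) := by
      apply intervalIntegral.integral_nonneg (by linarith : (0:ℝ) ≤ b - a)
      intro u hu
      exact mul_nonneg (gd_nonneg hα hu.1 (by cases hu; linarith)) (Real.exp_nonneg _)
    have hshift : (∫ s in (0:ℝ)..a, gd α (s + (b - a)) * Real.exp ((s + (b - a)) / θ)) =
        ∫ s in (b - a)..b, gd α s * Real.exp (s / θ) := by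
      have h := intervalIntegral.integral_comp_add_right (a := (0:ℝ)) (b := a)
        (fun s => gd α s * Real.exp (s / θ)) (b - a)
      rw [zero_add, show a + (b - a) = b by ring] at h
      exact h
    have hpos : 0 < ∫ s in (0:ℝ)..a,
        ((Real.exp (-b / θ) * gd α a) * (gd α (s + (b - a)) * Real.exp ((s + (b - a)) / θ)) -
          (Real.exp (-a / θ) * gd α b) * (gd α s * Real.exp (s / θ))) := by
      apply intervalIntegral.intervalIntegral_pos_of_pos_on
      · exact (((continuous_const.mul hcont2).sub (continuous_const.mul hcont)).intervalIntegrable _ _)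
      · intro s hs
        have hE : Real.exp (-b / θ) * Real.exp ((s + (b - a)) / θ) =
            Real.exp (-a / θ) * Real.exp (s / θ) := by
          rw [← Real.exp_add, ← Real.exp_add]
          congr 1
          ring
        have hcross := gd_cross hα hs.1 hs.2 hab hb1
        have hstep : Real.exp (-a / θ) * gd α b * (gd α s * Real.exp (s / θ)) <
            Real.exp (-b / θ) * gd α a *
              (gd α (s + (b - a)) * Real.exp ((s + (b - a)) / θ)) := by
          calc Real.exp (-a / θ) * gd α b * (gd α s * Real.exp (s / θ))
              = gd α b * gd α s * (Real.exp (-a / θ) * Real.exp (s / θ)) := by ring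
            _ < gd α a * gd α (s + (b - a)) * (Real.exp (-a / θ) * Real.exp (s / θ)) := by
                exact mul_lt_mul_of_pos_right hcross (by positivity)
            _ = Real.exp (-b / θ) * gd α a *
                (gd α (s + (b - a)) * Real.exp ((s + (b - a)) / θ)) := by
                rw [← hE]; ring
        linarith
      · exact ha0
    rw [intervalIntegral.integral_sub
        (f := fun s => Real.exp (-b / θ) * gd α a * (gd α (s + (b - a)) * Real.exp ((s + (b - a)) / θ)))
        (g := fun s => Real.exp (-a / θ) * gd α b * (gd α s * Real.exp (s / θ)))
        ((continuous_const.mul hcont2).intervalIntegrable _ _)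
        ((continuous_const.mul hcont).intervalIntegrable _ _),
      intervalIntegral.integral_const_mul, intervalIntegral.integral_const_mul,
      hshift] at hpos
    have hmono : Real.exp (-b / θ) * gd α a * (∫ s in (b - a)..b, gd α s * Real.exp (s / θ)) ≤
        Real.exp (-b / θ) * gd α a * Ib := by
      apply mul_le_mul_of_nonneg_left _ (by positivity)
      rw [hsplit]
      linarith
    have h1 : Real.exp (-a / θ) * gd α b * Ia <
        Real.exp (-b / θ) * gd α a * Ib := by linarith
    linarith [h1]
  calc θ⁻¹ * (Real.exp (-a / θ) * Ia) * gd α b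
      = θ⁻¹ * (Real.exp (-a / θ) * Ia * gd α b) := by ring
    _ < θ⁻¹ * (Real.exp (-b / θ) * Ib * gd α a) := by
        exact mul_lt_mul_of_pos_left key (by positivity)
    _ = θ⁻¹ * (Real.exp (-b / θ) * Ib) * gd α a := by ring
end

section
/- Suppose n = 2 and X₁, X₂ are iid Gamma(α,1). If θ₁θ₂ = η₁η₂ with θ₁ ≤ θ₂, η₁ ≤ η₂ and θ₁ ≤ η₁ (i.e., (log η₁, log η₂) is majorized by (log θ₁, log θ₂)), then P(θ₁X₁ + θ₂X₂ ≤ x) ≤ P(η₁X₁ + η₂X₂ ≤ x) for all x > 0. -/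
open MeasureTheory ProbabilityTheory
open scoped ENNReal

/-- The linear involution `p ↦ (k⁻¹ * p.2, k * p.1)` preserves Lebesgue measure on `ℝ × ℝ`. -/
lemma aux_map_volume_stmt12 {k : ℝ} (hk : k ≠ 0) :
    Measure.map (fun p : ℝ × ℝ => (k⁻¹ * p.2, k * p.1)) volume = volume := by
  have hR : Measurable fun p : ℝ × ℝ => (k⁻¹ * p.2, k * p.1) :=
    (measurable_snd.const_mul _).prodMk (measurable_fst.const_mul _)
  rw [Measure.volume_eq_prod]
  refine (Measure.prod_eq fun s t hs ht => ?_).symm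
  rw [Measure.map_apply hR (hs.prod ht)]
  have hpre : (fun p : ℝ × ℝ => (k⁻¹ * p.2, k * p.1)) ⁻¹' (s ×ˢ t)
      = ((fun y : ℝ => k * y) ⁻¹' t) ×ˢ ((fun y : ℝ => k⁻¹ * y) ⁻¹' s) := by
    ext p
    simp only [Set.mem_preimage, Set.mem_prod]
    tauto
  rw [hpre, Measure.prod_prod,
    Real.volume_preimage_mul_left hk, Real.volume_preimage_mul_left (inv_ne_zero hk)]
  have h1 : ENNReal.ofReal |k⁻¹| * ENNReal.ofReal |k⁻¹⁻¹| = 1 := by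
    rw [← ENNReal.ofReal_mul (abs_nonneg _), ← abs_mul, mul_inv_cancel₀ (inv_ne_zero hk),
      abs_one, ENNReal.ofReal_one]
  calc ENNReal.ofReal |k⁻¹| * volume t * (ENNReal.ofReal |k⁻¹⁻¹| * volume s)
      = ENNReal.ofReal |k⁻¹| * ENNReal.ofReal |k⁻¹⁻¹| * (volume s * volume t) := by ring
    _ = volume s * volume t := by rw [h1, one_mul]

/-- The product of two gamma measures as a measure with density on `ℝ × ℝ`. -/
lemma aux_prod_density_stmt12 {α : ℝ} (hα : 0 < α) :
    (gammaMeasure α 1).prod (gammaMeasure α 1)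
      = volume.withDensity (fun p : ℝ × ℝ => gammaPDF α 1 p.1 * gammaPDF α 1 p.2) := by
  haveI : IsProbabilityMeasure (gammaMeasure α 1) := isProbabilityMeasure_gammaMeasure hα one_pos
  refine Measure.prod_eq fun s t hs ht => ?_
  have hm : Measurable (gammaPDF α 1) := (measurable_gammaPDFReal α 1).ennreal_ofReal
  rw [withDensity_apply _ (hs.prod ht), Measure.volume_eq_prod, ← Measure.prod_restrict,
    lintegral_prod_mul hm.aemeasurable hm.aemeasurable,
    gammaMeasure, withDensity_apply _ hs, withDensity_apply _ ht]

theorem stmt_12 {Ω : Type*} [MeasureSpace Ω] [IsProbabilityMeasure (ℙ : Measure Ω)]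
    (α : ℝ) (hα : 0 < α)
    (X₁ X₂ : Ω → ℝ) (hm₁ : Measurable X₁) (hm₂ : Measurable X₂)
    (hindep : IndepFun X₁ X₂ ℙ)
    (hlaw₁ : Measure.map X₁ ℙ = gammaMeasure α 1)
    (hlaw₂ : Measure.map X₂ ℙ = gammaMeasure α 1)
    (θ₁ θ₂ η₁ η₂ : ℝ) (hθ₁ : 0 < θ₁) (hη₁ : 0 < η₁)
    (hθ : θ₁ ≤ θ₂) (hη : η₁ ≤ η₂) (hθη : θ₁ ≤ η₁)
    (hprod : θ₁ * θ₂ = η₁ * η₂) :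
    ∀ x : ℝ, 0 < x →
      ℙ {ω | θ₁ * X₁ ω + θ₂ * X₂ ω ≤ x} ≤ ℙ {ω | η₁ * X₁ ω + η₂ * X₂ ω ≤ x} := by
  intro x hx
  rcases eq_or_lt_of_le hθη with h1 | h1
  · -- degenerate case: equal weights
    have h2 : θ₂ = η₂ := by
      apply mul_left_cancel₀ hθ₁.ne'
      rw [hprod, ← h1]
    rw [h1, h2]
  -- main case : θ₁ < η₁
  have hθ₂ : 0 < θ₂ := lt_of_lt_of_le hθ₁ hθ
  have hη₂ : 0 < η₂ := lt_of_lt_of_le hη₁ hη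
  have hη₂θ₂ : η₂ < θ₂ := by
    have h3 : θ₁ * η₂ < θ₁ * θ₂ := by
      rw [hprod]
      exact mul_lt_mul_of_pos_right h1 hη₂
    exact lt_of_mul_lt_mul_left h3 hθ₁.le
  set k : ℝ := η₁ / θ₂ with hk_def
  have hk0 : 0 < k := div_pos hη₁ hθ₂
  have hk1 : k < 1 := (div_lt_one hθ₂).mpr (lt_of_le_of_lt hη hη₂θ₂)
  have hkθ₂ : k * θ₂ = η₁ := div_mul_cancel₀ _ hθ₂.ne'
  have hkη₂ : k * η₂ = θ₁ := by
    rw [hk_def, div_mul_eq_mul_div, ← hprod, mul_div_assoc, div_self hθ₂.ne', mul_one]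
  have hη₁k : η₁ * k⁻¹ = θ₂ := by
    rw [← hkθ₂]
    field_simp
  have hθ₁k : θ₁ * k⁻¹ = η₂ := by
    rw [← hkη₂]
    field_simp
  -- set up the joint law
  set μ : Measure ℝ := gammaMeasure α 1 with hμ_def
  haveI : IsProbabilityMeasure μ := isProbabilityMeasure_gammaMeasure hα one_pos
  have hmap : Measure.map (fun ω => (X₁ ω, X₂ ω)) ℙ = μ.prod μ := by
    rw [(indepFun_iff_map_prod_eq_prod_map_map hm₁.aemeasurable hm₂.aemeasurable).mp hindep,
      hlaw₁, hlaw₂]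
  set Sθ : Set (ℝ × ℝ) := {p | θ₁ * p.1 + θ₂ * p.2 ≤ x} with hSθ_def
  set Sη : Set (ℝ × ℝ) := {p | η₁ * p.1 + η₂ * p.2 ≤ x} with hSη_def
  have hSθ : MeasurableSet Sθ :=
    measurableSet_le (by fun_prop) measurable_const
  have hSη : MeasurableSet Sη :=
    measurableSet_le (by fun_prop) measurable_const
  have hPθ : ℙ {ω | θ₁ * X₁ ω + θ₂ * X₂ ω ≤ x} = (μ.prod μ) Sθ := by
    rw [← hmap, Measure.map_apply (hm₁.prodMk hm₂) hSθ]
    rfl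
  have hPη : ℙ {ω | η₁ * X₁ ω + η₂ * X₂ ω ≤ x} = (μ.prod μ) Sη := by
    rw [← hmap, Measure.map_apply (hm₁.prodMk hm₂) hSη]
    rfl
  rw [hPθ, hPη]
  -- the density and the reflection
  set g : ℝ × ℝ → ℝ≥0∞ := fun p => gammaPDF α 1 p.1 * gammaPDF α 1 p.2 with hg_def
  have hgm : Measurable g :=
    ((measurable_gammaPDFReal α 1).ennreal_ofReal.comp measurable_fst).mul
      ((measurable_gammaPDFReal α 1).ennreal_ofReal.comp measurable_snd)
  set R : ℝ × ℝ → ℝ × ℝ := fun p => (k⁻¹ * p.2, k * p.1) with hR_def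
  have hRm : Measurable R := (measurable_snd.const_mul _).prodMk (measurable_fst.const_mul _)
  have hRR : ∀ p : ℝ × ℝ, R (R p) = p := by
    intro p
    have ha : k⁻¹ * (k * p.1) = p.1 := by field_simp
    have hb : k * (k⁻¹ * p.2) = p.2 := by field_simp
    simp only [hR_def, ha, hb]
  have hprodν : μ.prod μ = volume.withDensity g := aux_prod_density_stmt12 hα
  -- arithmetic identities for the reflection
  have e1 : ∀ p : ℝ × ℝ, η₁ * (k⁻¹ * p.2) + η₂ * (k * p.1) = θ₁ * p.1 + θ₂ * p.2 := by
    intro p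
    calc η₁ * (k⁻¹ * p.2) + η₂ * (k * p.1) = (η₁ * k⁻¹) * p.2 + (k * η₂) * p.1 := by ring
      _ = θ₂ * p.2 + θ₁ * p.1 := by rw [hη₁k, hkη₂]
      _ = θ₁ * p.1 + θ₂ * p.2 := by ring
  have e2 : ∀ p : ℝ × ℝ, θ₁ * (k⁻¹ * p.2) + θ₂ * (k * p.1) = η₁ * p.1 + η₂ * p.2 := by
    intro p
    calc θ₁ * (k⁻¹ * p.2) + θ₂ * (k * p.1) = (θ₁ * k⁻¹) * p.2 + (k * θ₂) * p.1 := by ring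
      _ = η₂ * p.2 + η₁ * p.1 := by rw [hθ₁k, hkθ₂]
      _ = η₁ * p.1 + η₂ * p.2 := by ring
  have hRpre : R ⁻¹' (Sη \ Sθ) = Sθ \ Sη := by
    ext p
    simp only [Set.mem_preimage, Set.mem_diff, hSθ_def, hSη_def, Set.mem_setOf_eq, hR_def]
    rw [e1 p, e2 p]
  -- the pointwise density inequality
  have hgRg : ∀ q : ℝ × ℝ, q ∈ Sη \ Sθ → g (R q) ≤ g q := by
    intro q hq
    obtain ⟨hqη, hqθ⟩ := hq
    simp only [hSη_def, Set.mem_setOf_eq] at hqη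
    simp only [hSθ_def, Set.mem_setOf_eq] at hqθ
    by_cases h1q : 0 ≤ q.1
    · by_cases h2q : 0 ≤ q.2
      · -- main case
        have hqθ' : x < θ₁ * q.1 + θ₂ * q.2 := lt_of_not_ge hqθ
        have e3 : (θ₂ - η₂) * (k * q.1) = (η₁ - θ₁) * q.1 := by
          linear_combination q.1 * hkθ₂ - q.1 * hkη₂
        have h6 : (θ₂ - η₂) * (k * q.1) < (θ₂ - η₂) * q.2 := by
          rw [e3]
          nlinarith [hqη, hqθ']
        have hq2 : k * q.1 ≤ q.2 :=
          (lt_of_mul_lt_mul_left h6 (sub_pos.mpr hη₂θ₂).le).le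
        -- now the density inequality
        have hk1' : 0 ≤ k⁻¹ * q.2 := mul_nonneg (inv_nonneg.mpr hk0.le) h2q
        have hk2' : 0 ≤ k * q.1 := mul_nonneg hk0.le h1q
        simp only [hg_def, hR_def]
        rw [gammaPDF_of_nonneg hk1', gammaPDF_of_nonneg hk2',
          gammaPDF_of_nonneg h1q, gammaPDF_of_nonneg h2q]
        have hc : (0:ℝ) ≤ (1:ℝ) ^ α / Real.Gamma α :=
          div_nonneg (Real.rpow_nonneg zero_le_one α) (Real.Gamma_pos_of_pos hα).le
        rw [← ENNReal.ofReal_mul (by positivity), ← ENNReal.ofReal_mul (by positivity)]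
        apply ENNReal.ofReal_le_ofReal
        set c : ℝ := (1:ℝ) ^ α / Real.Gamma α with hc_def
        have key_eq_l : (k⁻¹ * q.2) ^ (α - 1) * (k * q.1) ^ (α - 1)
            = (q.1 * q.2) ^ (α - 1) := by
          rw [← Real.mul_rpow hk1' hk2']
          congr 1
          field_simp
        have key_eq_r : q.1 ^ (α - 1) * q.2 ^ (α - 1) = (q.1 * q.2) ^ (α - 1) :=
          (Real.mul_rpow h1q h2q).symm
        have hexp : Real.exp (-(1 * (k⁻¹ * q.2))) * Real.exp (-(1 * (k * q.1)))
            ≤ Real.exp (-(1 * q.1)) * Real.exp (-(1 * q.2)) := by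
          rw [← Real.exp_add, ← Real.exp_add]
          apply Real.exp_le_exp.mpr
          have goal' : q.1 + q.2 ≤ k * q.1 + k⁻¹ * q.2 := by
            rw [← mul_le_mul_iff_right₀ hk0]
            have h7 : k * (k * q.1 + k⁻¹ * q.2) = k * k * q.1 + q.2 := by
              field_simp
            rw [h7]
            nlinarith [mul_nonneg (sub_nonneg.mpr hk1.le) (sub_nonneg.mpr hq2)]
          linarith
        calc c * (k⁻¹ * q.2) ^ (α - 1) * Real.exp (-(1 * (k⁻¹ * q.2)))
              * (c * (k * q.1) ^ (α - 1) * Real.exp (-(1 * (k * q.1))))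
            = c ^ 2 * ((k⁻¹ * q.2) ^ (α - 1) * (k * q.1) ^ (α - 1))
              * (Real.exp (-(1 * (k⁻¹ * q.2))) * Real.exp (-(1 * (k * q.1)))) := by ring
          _ = c ^ 2 * ((q.1 * q.2) ^ (α - 1))
              * (Real.exp (-(1 * (k⁻¹ * q.2))) * Real.exp (-(1 * (k * q.1)))) := by
              rw [key_eq_l]
          _ ≤ c ^ 2 * ((q.1 * q.2) ^ (α - 1))
              * (Real.exp (-(1 * q.1)) * Real.exp (-(1 * q.2))) := by
              apply mul_le_mul_of_nonneg_left hexp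
              positivity
          _ = c * q.1 ^ (α - 1) * Real.exp (-(1 * q.1))
              * (c * q.2 ^ (α - 1) * Real.exp (-(1 * q.2))) := by
              rw [← key_eq_r]
              ring
      · -- q.2 < 0 : density at R q vanishes
        have : k⁻¹ * q.2 < 0 :=
          mul_neg_of_pos_of_neg (inv_pos.mpr hk0) (lt_of_not_ge h2q)
        simp only [hg_def, hR_def]
        rw [gammaPDF_of_neg this, zero_mul]
        exact zero_le
    · -- q.1 < 0 : density at R q vanishes
      have : k * q.1 < 0 := mul_neg_of_pos_of_neg hk0 (lt_of_not_ge h1q)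
      simp only [hg_def, hR_def]
      rw [gammaPDF_of_neg this, mul_zero]
      exact zero_le
  -- the key measure inequality via the reflection
  have key : (μ.prod μ) (Sθ \ Sη) ≤ (μ.prod μ) (Sη \ Sθ) := by
    have hmapvol : Measure.map R volume = volume := aux_map_volume_stmt12 hk0.ne'
    have hind_meas : Measurable ((Sη \ Sθ).indicator (g ∘ R)) :=
      (hgm.comp hRm).indicator (hSη.diff hSθ)
    calc (μ.prod μ) (Sθ \ Sη)
        = ∫⁻ p, (Sθ \ Sη).indicator g p ∂volume := by
          rw [hprodν, withDensity_apply _ (hSθ.diff hSη),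
            lintegral_indicator (hSθ.diff hSη)]
      _ = ∫⁻ p, (Sη \ Sθ).indicator (g ∘ R) (R p) ∂volume := by
          refine lintegral_congr fun p => ?_
          by_cases hp : p ∈ Sθ \ Sη
          · have hp' : R p ∈ Sη \ Sθ := by
              rw [← hRpre] at hp
              exact hp
            rw [Set.indicator_of_mem hp, Set.indicator_of_mem hp', Function.comp_apply, hRR p]
          · have hp' : R p ∉ Sη \ Sθ := by
              rw [← hRpre] at hp
              exact hp
            rw [Set.indicator_of_notMem hp, Set.indicator_of_notMem hp']
      _ = ∫⁻ q, (Sη \ Sθ).indicator (g ∘ R) q ∂volume := by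
          conv_rhs => rw [← hmapvol]
          rw [lintegral_map hind_meas hRm]
      _ ≤ ∫⁻ q, (Sη \ Sθ).indicator g q ∂volume := by
          apply lintegral_mono
          intro q
          by_cases hq : q ∈ Sη \ Sθ
          · rw [Set.indicator_of_mem hq, Set.indicator_of_mem hq, Function.comp_apply]
            exact hgRg q hq
          · rw [Set.indicator_of_notMem hq, Set.indicator_of_notMem hq]
      _ = (μ.prod μ) (Sη \ Sθ) := by
          rw [hprodν, withDensity_apply _ (hSη.diff hSθ),
            lintegral_indicator (hSη.diff hSθ)]
  calc (μ.prod μ) Sθ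
      = (μ.prod μ) (Sθ ∩ Sη) + (μ.prod μ) (Sθ \ Sη) := (measure_inter_add_diff _ hSη).symm
    _ ≤ (μ.prod μ) (Sθ ∩ Sη) + (μ.prod μ) (Sη \ Sθ) := add_le_add_right key _
    _ = (μ.prod μ) (Sη ∩ Sθ) + (μ.prod μ) (Sη \ Sθ) := by rw [Set.inter_comm]
    _ = (μ.prod μ) Sη := measure_inter_add_diff _ hSθ
end

section
/- Let X₁, X₂ be iid Gamma(α,1), θ = (θ₁, θ₂) with θ₁ ≤ θ₂. Then F_θ(x)/F_η(x) → (η₁η₂/(θ₁θ₂))^α as x → 0+, where F_θ(x) = P(θ₁X₁ + θ₂X₂ ≤ x) and F_η likewise for positive η. -/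
open MeasureTheory ProbabilityTheory Filter Set

namespace GammaRatioAux

open Real ENNReal

noncomputable def vol2 : Measure (ℝ × ℝ) := (volume : Measure ℝ).prod volume

lemma wd_prod (F G : ℝ → ℝ) (hF : Measurable F) (hG : Measurable G) :
    (volume.withDensity fun x => ENNReal.ofReal (F x)).prod
      (volume.withDensity fun x => ENNReal.ofReal (G x))
    = vol2.withDensity fun p => ENNReal.ofReal (F p.1) * ENNReal.ofReal (G p.2) := by
  refine Measure.prod_eq fun s t hs ht => ?_
  rw [withDensity_apply _ (hs.prod ht)]
  rw [show vol2.restrict (s ×ˢ t) = (volume.restrict s).prod (volume.restrict t) from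
    (Measure.prod_restrict s t).symm]
  rw [lintegral_prod_mul (f := fun x => ENNReal.ofReal (F x)) (g := fun x => ENNReal.ofReal (G x))
    (by fun_prop) (by fun_prop)]
  rw [withDensity_apply _ hs, withDensity_apply _ ht]

lemma cov2 (c d : ℝ) (hc : 0 < c) (hd : 0 < d) (H : ℝ × ℝ → ℝ≥0∞) (hH : Measurable H)
    (S : Set (ℝ × ℝ)) (hS : MeasurableSet S) :
    ∫⁻ p in S, H p ∂vol2
      = ENNReal.ofReal (c * d) * ∫⁻ q in (fun q : ℝ × ℝ => (c * q.1, d * q.2)) ⁻¹' S,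
          H (c * q.1, d * q.2) ∂vol2 := by
  have hT : Measurable fun q : ℝ × ℝ => (c * q.1, d * q.2) := by fun_prop
  have hprod : vol2 = ENNReal.ofReal (c * d) •
      Measure.map (fun q : ℝ × ℝ => (c * q.1, d * q.2)) vol2 := by
    refine Measure.prod_eq fun s t hs ht => ?_
    rw [Measure.smul_apply, Measure.map_apply hT (hs.prod ht)]
    have hpre : (fun q : ℝ × ℝ => (c * q.1, d * q.2)) ⁻¹' (s ×ˢ t)
        = ((c * ·) ⁻¹' s) ×ˢ ((d * ·) ⁻¹' t) := rfl
    rw [hpre]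
    show ENNReal.ofReal (c * d) * (volume.prod volume) _ = _
    rw [Measure.prod_prod, Real.volume_preimage_mul_left hc.ne' s,
      Real.volume_preimage_mul_left hd.ne' t]
    rw [abs_of_pos (inv_pos.mpr hc), abs_of_pos (inv_pos.mpr hd)]
    calc ENNReal.ofReal (c * d) * (ENNReal.ofReal c⁻¹ * volume s *
          (ENNReal.ofReal d⁻¹ * volume t))
        = (ENNReal.ofReal (c * d) * ENNReal.ofReal c⁻¹ * ENNReal.ofReal d⁻¹) *
            (volume s * volume t) := by ring
      _ = volume s * volume t := by
          rw [← ENNReal.ofReal_mul (by positivity), ← ENNReal.ofReal_mul (by positivity)]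
          rw [show c * d * c⁻¹ * d⁻¹ = 1 by field_simp]
          simp
  calc ∫⁻ p in S, H p ∂vol2
      = ∫⁻ p in S, H p ∂(ENNReal.ofReal (c * d) •
          Measure.map (fun q : ℝ × ℝ => (c * q.1, d * q.2)) vol2) := by rw [← hprod]
    _ = ENNReal.ofReal (c * d) * ∫⁻ p in S, H p
          ∂(Measure.map (fun q : ℝ × ℝ => (c * q.1, d * q.2)) vol2) := by
        rw [Measure.restrict_smul, lintegral_smul_measure, smul_eq_mul]
    _ = _ := by rw [setLIntegral_map hS hH hT]

noncomputable def Jf (α x : ℝ) (p : ℝ × ℝ) : ℝ≥0∞ :=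
  ENNReal.ofReal (p.1 ^ (α - 1) * p.2 ^ (α - 1) * Real.exp (-(x * (p.1 + p.2))))

def B (a b : ℝ) : Set (ℝ × ℝ) := {p | 0 ≤ p.1 ∧ 0 ≤ p.2 ∧ a * p.1 + b * p.2 ≤ 1}

noncomputable def J (α a b x : ℝ) : ℝ≥0∞ := ∫⁻ p in B a b, Jf α x p ∂vol2

lemma measurable_Jf (α x : ℝ) : Measurable (Jf α x) := by
  unfold Jf
  apply Measurable.ennreal_ofReal
  fun_prop

lemma measurableSet_B (a b : ℝ) : MeasurableSet (B a b) := by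
  have : B a b = {p : ℝ × ℝ | 0 ≤ p.1} ∩ ({p | 0 ≤ p.2} ∩ {p | a * p.1 + b * p.2 ≤ 1}) := rfl
  rw [this]
  exact (measurableSet_le measurable_const (by fun_prop)).inter
    ((measurableSet_le measurable_const (by fun_prop)).inter
      (measurableSet_le (by fun_prop) measurable_const))

lemma prob_eq (α a b x : ℝ) (hα : 0 < α) (ha : 0 < a) (hb : 0 < b) (hx : 0 < x) :
    (gammaMeasure α 1).prod (gammaMeasure α 1) {p : ℝ × ℝ | a * p.1 + b * p.2 ≤ x}
      = ENNReal.ofReal (x ^ (2 * α) / Real.Gamma α ^ 2) * J α a b x := by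
  have hΓ : (0 : ℝ) < Real.Gamma α := Real.Gamma_pos_of_pos hα
  have hc0 : (0 : ℝ) ≤ 1 / Real.Gamma α := (one_div_pos.mpr hΓ).le
  have hS : MeasurableSet {p : ℝ × ℝ | a * p.1 + b * p.2 ≤ x} :=
    measurableSet_le (by fun_prop) measurable_const
  have hgpdf : gammaPDF α 1 = fun y => ENNReal.ofReal (gammaPDFReal α 1 y) := rfl
  have hHmeas : Measurable fun p : ℝ × ℝ =>
      ENNReal.ofReal (gammaPDFReal α 1 p.1) * ENNReal.ofReal (gammaPDFReal α 1 p.2) :=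
    (((measurable_gammaPDFReal α 1).comp measurable_fst).ennreal_ofReal).mul
      (((measurable_gammaPDFReal α 1).comp measurable_snd).ennreal_ofReal)
  rw [gammaMeasure, hgpdf, wd_prod _ _ (measurable_gammaPDFReal α 1) (measurable_gammaPDFReal α 1),
    withDensity_apply _ hS]
  rw [cov2 x x hx hx _ hHmeas _ hS]
  have hpre : (fun q : ℝ × ℝ => (x * q.1, x * q.2)) ⁻¹' {p : ℝ × ℝ | a * p.1 + b * p.2 ≤ x}
      = {q : ℝ × ℝ | a * q.1 + b * q.2 ≤ 1} := by
    ext q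
    simp only [mem_preimage, mem_setOf_eq]
    constructor <;> intro h <;> nlinarith
  rw [hpre]
  have hfacpos : ∀ y : ℝ, 0 ≤ y → gammaPDFReal α 1 (x * y)
      = 1 / Real.Gamma α * (x * y) ^ (α - 1) * Real.exp (-(x * y)) := by
    intro y hy
    rw [gammaPDFReal, if_pos (by positivity), Real.one_rpow, one_mul]
  have hfacneg : ∀ y : ℝ, y < 0 → gammaPDFReal α 1 y = 0 := by
    intro y hy
    rw [gammaPDFReal, if_neg (not_le.mpr hy)]
  set Q : Set (ℝ × ℝ) := {q | 0 ≤ q.1 ∧ 0 ≤ q.2} with hQdef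
  have hQ : MeasurableSet Q := by
    rw [hQdef, show {q : ℝ × ℝ | 0 ≤ q.1 ∧ 0 ≤ q.2}
      = {q : ℝ × ℝ | 0 ≤ q.1} ∩ {q : ℝ × ℝ | 0 ≤ q.2} from rfl]
    exact (measurableSet_le measurable_const measurable_fst).inter
      (measurableSet_le measurable_const measurable_snd)
  have hfun : (fun q : ℝ × ℝ =>
        ENNReal.ofReal (gammaPDFReal α 1 (x * q.1)) * ENNReal.ofReal (gammaPDFReal α 1 (x * q.2)))
      = Q.indicator (fun q : ℝ × ℝ => ENNReal.ofReal
          ((1 / Real.Gamma α * (x * q.1) ^ (α - 1) * Real.exp (-(x * q.1))) *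
           (1 / Real.Gamma α * (x * q.2) ^ (α - 1) * Real.exp (-(x * q.2))))) := by
    funext q
    by_cases h1 : 0 ≤ q.1
    · by_cases h2 : 0 ≤ q.2
      · rw [indicator_of_mem (show q ∈ Q from ⟨h1, h2⟩), hfacpos _ h1, hfacpos _ h2]
        rw [← ENNReal.ofReal_mul]
        exact mul_nonneg (mul_nonneg hc0 (Real.rpow_nonneg (by positivity) _)) (Real.exp_nonneg _)
      · rw [indicator_of_notMem (show q ∉ Q by simp [hQdef, h2])]
        rw [hfacneg _ (mul_neg_of_pos_of_neg hx (lt_of_not_ge h2))]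
        simp
    · rw [indicator_of_notMem (show q ∉ Q by simp [hQdef, h1])]
      rw [hfacneg _ (mul_neg_of_pos_of_neg hx (lt_of_not_ge h1))]
      simp
  rw [hfun, lintegral_indicator hQ, Measure.restrict_restrict hQ]
  have hQS : Q ∩ {q : ℝ × ℝ | a * q.1 + b * q.2 ≤ 1} = B a b := by
    ext q; simp [hQdef, B, and_assoc]
  rw [hQS]
  have hcongr : ∫⁻ q in B a b, ENNReal.ofReal
        ((1 / Real.Gamma α * (x * q.1) ^ (α - 1) * Real.exp (-(x * q.1))) *
         (1 / Real.Gamma α * (x * q.2) ^ (α - 1) * Real.exp (-(x * q.2)))) ∂vol2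
      = ∫⁻ q in B a b, ENNReal.ofReal (x ^ (α - 1) * x ^ (α - 1) / Real.Gamma α ^ 2)
          * Jf α x q ∂vol2 := by
    refine setLIntegral_congr_fun (measurableSet_B a b) (fun q hq => ?_)
    obtain ⟨hq1, hq2, -⟩ := hq
    unfold Jf
    rw [← ENNReal.ofReal_mul (by positivity)]
    congr 1
    rw [Real.mul_rpow hx.le hq1, Real.mul_rpow hx.le hq2]
    have e1 : Real.exp (-(x * q.1)) * Real.exp (-(x * q.2))
        = Real.exp (-(x * (q.1 + q.2))) := by
      rw [← Real.exp_add]; ring_nf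
    rw [← e1]
    ring
  rw [hcongr, lintegral_const_mul' _ _ ENNReal.ofReal_ne_top, ← mul_assoc,
    ← ENNReal.ofReal_mul (by positivity)]
  have h1 : x * x ^ (α - 1) = x ^ α := by
    have := Real.rpow_add hx 1 (α - 1)
    rw [Real.rpow_one] at this
    rw [← this]; norm_num
  have h2 : x ^ α * x ^ α = x ^ (2 * α) := by
    rw [← Real.rpow_add hx]; ring_nf
  have : x * x * (x ^ (α - 1) * x ^ (α - 1) / Real.Gamma α ^ 2)
      = x ^ (2 * α) / Real.Gamma α ^ 2 := by
    calc x * x * (x ^ (α - 1) * x ^ (α - 1) / Real.Gamma α ^ 2)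
        = (x * x ^ (α - 1)) * (x * x ^ (α - 1)) / Real.Gamma α ^ 2 := by ring
      _ = x ^ (2 * α) / Real.Gamma α ^ 2 := by rw [h1, h2]
  rw [this]
  rfl

lemma Jf_rect (α : ℝ) {s t : Set ℝ} (hs : MeasurableSet s) (ht : MeasurableSet t)
    (hs0 : s ⊆ Ici 0) :
    ∫⁻ p in s ×ˢ t, Jf α 0 p ∂vol2
      = (∫⁻ u in s, ENNReal.ofReal (u ^ (α - 1))) * ∫⁻ v in t, ENNReal.ofReal (v ^ (α - 1)) := by
  have hcongr : ∫⁻ p in s ×ˢ t, Jf α 0 p ∂vol2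
      = ∫⁻ p in s ×ˢ t, ENNReal.ofReal (p.1 ^ (α - 1)) * ENNReal.ofReal (p.2 ^ (α - 1)) ∂vol2 := by
    refine setLIntegral_congr_fun (hs.prod ht) (fun p hp => ?_)
    unfold Jf
    rw [zero_mul, neg_zero, Real.exp_zero, mul_one,
      ENNReal.ofReal_mul (Real.rpow_nonneg (hs0 hp.1) _)]
  rw [hcongr, show vol2.restrict (s ×ˢ t) = (volume.restrict s).prod (volume.restrict t) from
    (Measure.prod_restrict s t).symm,
    lintegral_prod_mul (f := fun u : ℝ => ENNReal.ofReal (u ^ (α - 1)))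
      (g := fun v : ℝ => ENNReal.ofReal (v ^ (α - 1))) (by fun_prop) (by fun_prop)]

lemma lint_rpow_fin (α c : ℝ) (hα : 0 < α) (hc : 0 < c) :
    ∫⁻ u in Icc (0:ℝ) c, ENNReal.ofReal (u ^ (α - 1)) ≠ ⊤ := by
  rw [← Measure.restrict_congr_set Ioc_ae_eq_Icc]
  have hi : IntegrableOn (fun u : ℝ => u ^ (α - 1)) (Ioc 0 c) volume := by
    have := intervalIntegral.intervalIntegrable_rpow' (a := 0) (b := c) (by linarith : (-1:ℝ) < α - 1)
    rwa [intervalIntegrable_iff_integrableOn_Ioc_of_le hc.le] at this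
  refine (lintegral_ofReal_ne_top_iff_integrable hi.aestronglyMeasurable ?_).mpr hi
  filter_upwards [ae_restrict_mem measurableSet_Ioc] with u hu
  exact Real.rpow_nonneg hu.1.le _

lemma lint_rpow_pos (α c : ℝ) (hc : 0 < c) :
    0 < ∫⁻ u in Ioc (0:ℝ) c, ENNReal.ofReal (u ^ (α - 1)) := by
  rw [lintegral_pos_iff_support (by fun_prop)]
  have hsub : Ioc (0:ℝ) c ⊆ Function.support fun u : ℝ => ENNReal.ofReal (u ^ (α - 1)) := by
    intro u hu
    simp only [Function.mem_support, ne_eq, ENNReal.ofReal_eq_zero, not_le]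
    exact Real.rpow_pos_of_pos hu.1 _
  calc (0:ℝ≥0∞) < ENNReal.ofReal c := by simpa using hc
    _ = volume (Ioc (0:ℝ) c) := by rw [Real.volume_Ioc]; norm_num
    _ ≤ (volume.restrict (Ioc (0:ℝ) c)) (Function.support fun u : ℝ =>
          ENNReal.ofReal (u ^ (α - 1))) := by
        rw [Measure.restrict_apply' measurableSet_Ioc]
        exact measure_mono fun u hu => ⟨hsub hu, hu⟩

lemma J_anti (α a b : ℝ) {x y : ℝ} (hxy : x ≤ y) : J α a b y ≤ J α a b x := by
  refine setLIntegral_mono (measurable_Jf α x) fun q hq => ?_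
  obtain ⟨hq1, hq2, -⟩ := hq
  unfold Jf
  refine ENNReal.ofReal_le_ofReal ?_
  refine mul_le_mul_of_nonneg_left ?_ (by positivity)
  exact Real.exp_le_exp.mpr (by nlinarith)

lemma J_fin (α a b : ℝ) (hα : 0 < α) (ha : 0 < a) (hb : 0 < b) : J α a b 0 ≠ ⊤ := by
  have hsub : B a b ⊆ Icc (0:ℝ) a⁻¹ ×ˢ Icc (0:ℝ) b⁻¹ := by
    rintro ⟨q1, q2⟩ ⟨h1, h2, h3⟩
    refine ⟨⟨h1, ?_⟩, ⟨h2, ?_⟩⟩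
    · rw [show a⁻¹ = 1/a from (one_div a).symm, le_div_iff₀ ha]; nlinarith
    · rw [show b⁻¹ = 1/b from (one_div b).symm, le_div_iff₀ hb]; nlinarith
  refine ne_top_of_le_ne_top ?_ (lintegral_mono_set hsub)
  rw [Jf_rect α measurableSet_Icc measurableSet_Icc (fun u hu => hu.1)]
  exact ENNReal.mul_ne_top (lint_rpow_fin α a⁻¹ hα (inv_pos.mpr ha))
    (lint_rpow_fin α b⁻¹ hα (inv_pos.mpr hb))

lemma J_pos (α a b : ℝ) (ha : 0 < a) (hb : 0 < b) : 0 < J α a b 0 := by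
  set m := (a+b)⁻¹ with hm
  have hm0 : 0 < m := inv_pos.mpr (by linarith)
  have hsub : Ioc (0:ℝ) m ×ˢ Ioc (0:ℝ) m ⊆ B a b := by
    rintro ⟨q1, q2⟩ ⟨h1, h2⟩
    refine ⟨h1.1.le, h2.1.le, ?_⟩
    have hab : (a+b) * m = 1 := mul_inv_cancel₀ (by linarith)
    nlinarith [h1.2, h2.2]
  refine lt_of_lt_of_le ?_ (lintegral_mono_set hsub)
  rw [Jf_rect α measurableSet_Ioc measurableSet_Ioc (fun u hu => hu.1.le)]
  exact ENNReal.mul_pos (lint_rpow_pos α m hm0).ne' (lint_rpow_pos α m hm0).ne'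

lemma J_scale (α a b : ℝ) (ha : 0 < a) (hb : 0 < b) :
    J α a b 0 = ENNReal.ofReal ((a * b) ^ (-α)) * J α 1 1 0 := by
  have ha' : (0:ℝ) < a⁻¹ := inv_pos.mpr ha
  have hb' : (0:ℝ) < b⁻¹ := inv_pos.mpr hb
  have hstart : J α a b 0 = ∫⁻ p in B a b, Jf α 0 p ∂vol2 := rfl
  rw [hstart, cov2 a⁻¹ b⁻¹ ha' hb' _ (measurable_Jf α 0) _ (measurableSet_B a b)]
  have hpre : (fun q : ℝ × ℝ => (a⁻¹ * q.1, b⁻¹ * q.2)) ⁻¹' B a b = B 1 1 := by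
    ext q
    have e1 : a * (a⁻¹ * q.1) = q.1 := by field_simp
    have e2 : b * (b⁻¹ * q.2) = q.2 := by field_simp
    simp only [B, mem_preimage, mem_setOf_eq, e1, e2, one_mul]
    constructor
    · rintro ⟨h1, h2, h3⟩
      refine ⟨by nlinarith, by nlinarith, h3⟩
    · rintro ⟨h1, h2, h3⟩
      exact ⟨by positivity, by positivity, h3⟩
  rw [hpre]
  have hcongr : ∫⁻ q in B 1 1, Jf α 0 (a⁻¹ * q.1, b⁻¹ * q.2) ∂vol2
      = ∫⁻ q in B 1 1, ENNReal.ofReal ((a⁻¹) ^ (α - 1) * (b⁻¹) ^ (α - 1)) * Jf α 0 q ∂vol2 := by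
    refine setLIntegral_congr_fun (measurableSet_B 1 1) (fun q hq => ?_)
    obtain ⟨hq1, hq2, -⟩ := hq
    unfold Jf
    simp only
    rw [Real.mul_rpow ha'.le hq1, Real.mul_rpow hb'.le hq2,
      ← ENNReal.ofReal_mul (by positivity)]
    congr 1
    rw [zero_mul, zero_mul, neg_zero, Real.exp_zero]
    ring
  rw [hcongr, lintegral_const_mul' _ _ ENNReal.ofReal_ne_top, ← mul_assoc,
    ← ENNReal.ofReal_mul (by positivity)]
  have hkey : ∀ c : ℝ, 0 < c → c⁻¹ * (c⁻¹) ^ (α - 1) = c ^ (-α) := by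
    intro c hc
    have h1 : (c⁻¹) ^ (1 + (α - 1)) = c⁻¹ ^ (1:ℝ) * (c⁻¹) ^ (α - 1) :=
      Real.rpow_add (inv_pos.mpr hc) 1 (α - 1)
    rw [Real.rpow_one] at h1
    have h2 : (1:ℝ) + (α - 1) = α := by ring
    rw [h2] at h1
    rw [← h1, Real.inv_rpow hc.le, ← Real.rpow_neg hc.le]
  have hconst : a⁻¹ * b⁻¹ * ((a⁻¹) ^ (α - 1) * (b⁻¹) ^ (α - 1)) = (a * b) ^ (-α) := by
    rw [Real.mul_rpow ha.le hb.le, ← hkey a ha, ← hkey b hb]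
    ring
  rw [hconst]
  rfl

lemma J_tendsto (α a b : ℝ) (hα : 0 < α) (ha : 0 < a) (hb : 0 < b) :
    Tendsto (fun x => (J α a b x).toReal) (nhdsWithin 0 (Ioi 0))
      (nhds (J α a b 0).toReal) := by
  set M := a⁻¹ + b⁻¹ with hM
  have hfin : J α a b 0 ≠ ⊤ := J_fin α a b hα ha hb
  have hup : ∀ x : ℝ, 0 ≤ x → (J α a b x).toReal ≤ (J α a b 0).toReal := fun x hx =>
    ENNReal.toReal_mono hfin (J_anti α a b hx)
  have hlow : ∀ x : ℝ, 0 ≤ x →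
      Real.exp (-(x * M)) * (J α a b 0).toReal ≤ (J α a b x).toReal := by
    intro x hx
    have hEnn : ENNReal.ofReal (Real.exp (-(x * M))) * J α a b 0 ≤ J α a b x := by
      rw [show J α a b 0 = ∫⁻ p in B a b, Jf α 0 p ∂vol2 from rfl,
        ← lintegral_const_mul' _ _ ENNReal.ofReal_ne_top]
      refine setLIntegral_mono (measurable_Jf α x) fun q hq => ?_
      obtain ⟨hq1, hq2, hq3⟩ := hq
      unfold Jf
      rw [← ENNReal.ofReal_mul (Real.exp_nonneg _)]
      refine ENNReal.ofReal_le_ofReal ?_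
      have hq1' : q.1 ≤ a⁻¹ := by
        rw [show a⁻¹ = 1/a from (one_div a).symm, le_div_iff₀ ha]; nlinarith
      have hq2' : q.2 ≤ b⁻¹ := by
        rw [show b⁻¹ = 1/b from (one_div b).symm, le_div_iff₀ hb]; nlinarith
      have hexp : Real.exp (-(x * M)) ≤ Real.exp (-(x * (q.1 + q.2))) := by
        refine Real.exp_le_exp.mpr ?_
        rw [hM]; nlinarith
      calc Real.exp (-(x * M)) * (q.1 ^ (α-1) * q.2 ^ (α-1) * Real.exp (-(0 * (q.1 + q.2))))
          = q.1 ^ (α-1) * q.2 ^ (α-1) * Real.exp (-(x * M)) := by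
            rw [zero_mul, neg_zero, Real.exp_zero]; ring
        _ ≤ q.1 ^ (α-1) * q.2 ^ (α-1) * Real.exp (-(x * (q.1 + q.2))) :=
            mul_le_mul_of_nonneg_left hexp (by positivity)
    calc Real.exp (-(x * M)) * (J α a b 0).toReal
        = (ENNReal.ofReal (Real.exp (-(x * M))) * J α a b 0).toReal := by
          rw [ENNReal.toReal_mul, ENNReal.toReal_ofReal (Real.exp_nonneg _)]
      _ ≤ (J α a b x).toReal :=
          ENNReal.toReal_mono (ne_top_of_le_ne_top hfin (J_anti α a b hx)) hEnn
  refine tendsto_of_tendsto_of_tendsto_of_le_of_le'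
    (g := fun x : ℝ => Real.exp (-(x * M)) * (J α a b 0).toReal) ?_ tendsto_const_nhds ?_ ?_
  · have hcontin : Continuous fun x : ℝ => Real.exp (-(x * M)) * (J α a b 0).toReal := by
      continuity
    have h0 := hcontin.tendsto 0
    simp only [zero_mul, neg_zero, Real.exp_zero, one_mul] at h0
    exact h0.mono_left nhdsWithin_le_nhds
  · exact eventually_nhdsWithin_of_forall fun x hx => hlow x (le_of_lt hx)
  · exact eventually_nhdsWithin_of_forall fun x hx => hup x (le_of_lt hx)

end GammaRatioAux

open GammaRatioAux

theorem stmt_14 {Ω : Type*} [MeasureSpace Ω] [IsProbabilityMeasure (ℙ : Measure Ω)]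
    (α : ℝ) (hα : 0 < α)
    (X₁ X₂ : Ω → ℝ) (hm₁ : Measurable X₁) (hm₂ : Measurable X₂)
    (hindep : IndepFun X₁ X₂ ℙ)
    (hlaw₁ : Measure.map X₁ ℙ = gammaMeasure α 1)
    (hlaw₂ : Measure.map X₂ ℙ = gammaMeasure α 1)
    (θ₁ θ₂ η₁ η₂ : ℝ) (hθ₁ : 0 < θ₁) (hθ : θ₁ ≤ θ₂) (hη₁ : 0 < η₁) (hη : η₁ ≤ η₂) :
    Tendsto (fun x : ℝ =>
        (ℙ {ω | θ₁ * X₁ ω + θ₂ * X₂ ω ≤ x}).toReal /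
          (ℙ {ω | η₁ * X₁ ω + η₂ * X₂ ω ≤ x}).toReal)
      (nhdsWithin 0 (Ioi 0)) (nhds ((η₁ * η₂ / (θ₁ * θ₂)) ^ α)) := by
  have hθ₂ : 0 < θ₂ := lt_of_lt_of_le hθ₁ hθ
  have hη₂ : 0 < η₂ := lt_of_lt_of_le hη₁ hη
  have hΓ : (0:ℝ) < Real.Gamma α := Real.Gamma_pos_of_pos hα
  have hP : ∀ (a b x : ℝ), ℙ {ω | a * X₁ ω + b * X₂ ω ≤ x}
      = (gammaMeasure α 1).prod (gammaMeasure α 1) {p : ℝ × ℝ | a * p.1 + b * p.2 ≤ x} := by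
    intro a b x
    have hS : MeasurableSet {p : ℝ × ℝ | a * p.1 + b * p.2 ≤ x} :=
      measurableSet_le (by fun_prop) measurable_const
    have hpair : Measure.map (fun ω => (X₁ ω, X₂ ω)) ℙ
        = (gammaMeasure α 1).prod (gammaMeasure α 1) := by
      rw [(indepFun_iff_map_prod_eq_prod_map_map hm₁.aemeasurable hm₂.aemeasurable).mp hindep,
        hlaw₁, hlaw₂]
    rw [← hpair, Measure.map_apply (hm₁.prodMk hm₂) hS]
    rfl
  have hJθ := J_tendsto α θ₁ θ₂ hα hθ₁ hθ₂
  have hJη := J_tendsto α η₁ η₂ hα hη₁ hη₂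
  have hηpos : 0 < (J α η₁ η₂ 0).toReal :=
    ENNReal.toReal_pos (J_pos α η₁ η₂ hη₁ hη₂).ne' (J_fin α η₁ η₂ hα hη₁ hη₂)
  have hdiv := hJθ.div hJη hηpos.ne'
  have hlim : (J α θ₁ θ₂ 0).toReal / (J α η₁ η₂ 0).toReal = (η₁ * η₂ / (θ₁ * θ₂)) ^ α := by
    rw [J_scale α θ₁ θ₂ hθ₁ hθ₂, J_scale α η₁ η₂ hη₁ hη₂,
      ENNReal.toReal_mul, ENNReal.toReal_mul,
      ENNReal.toReal_ofReal (Real.rpow_nonneg (by positivity) _),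
      ENNReal.toReal_ofReal (Real.rpow_nonneg (by positivity) _)]
    have hc : 0 < (J α 1 1 0).toReal :=
      ENNReal.toReal_pos (J_pos α 1 1 one_pos one_pos).ne' (J_fin α 1 1 hα one_pos one_pos)
    rw [mul_div_mul_right _ _ hc.ne']
    rw [Real.rpow_neg (by positivity), Real.rpow_neg (by positivity),
      Real.div_rpow (by positivity) (by positivity)]
    have h1 : (θ₁ * θ₂ : ℝ) ^ α ≠ 0 := (Real.rpow_pos_of_pos (by positivity) _).ne'
    have h2 : (η₁ * η₂ : ℝ) ^ α ≠ 0 := (Real.rpow_pos_of_pos (by positivity) _).ne'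
    field_simp
  rw [← hlim]
  refine Tendsto.congr' ?_ hdiv
  refine eventually_nhdsWithin_of_forall fun x hx => ?_
  have hx' : (0:ℝ) < x := hx
  have hC : (0:ℝ) < x ^ (2*α) / Real.Gamma α ^ 2 :=
    div_pos (Real.rpow_pos_of_pos hx' _) (pow_pos hΓ 2)
  simp only [Pi.div_apply]
  rw [hP θ₁ θ₂ x, hP η₁ η₂ x, prob_eq α θ₁ θ₂ x hα hθ₁ hθ₂ hx',
    prob_eq α η₁ η₂ x hα hη₁ hη₂ hx', ENNReal.toReal_mul, ENNReal.toReal_mul,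
    ENNReal.toReal_ofReal hC.le, mul_div_mul_left _ _ hC.ne']
end

section
/- Let η, θ be positive vectors in ℝⁿ with η ≺_V θ (θ V-majorizes η) and ∏ᵢ(ηᵢ/θᵢ) ≥ 1. Then log η is weakly submajorized in the lower sense by log θ: for every l = 1,...,n, the sum of the l smallest components of log η is at least the sum of the l smallest components of log θ. -/
open Finset

variable {n : ℕ}

/-- The increasing rearrangement of a vector. -/
noncomputable def sortv (v : Fin n → ℝ) : Fin n → ℝ := v ∘ Tuple.sort v

/-- Partial sum of the `l` smallest components of `v`. -/
noncomputable def psum (v : Fin n → ℝ) (l : ℕ) : ℝ :=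
  ∑ i ∈ Finset.univ.filter (fun i : Fin n => (i : ℕ) < l), sortv v i

/-- Ordinary majorization `η ≺ θ`: equal total sums and every partial sum of the `l`
smallest components of `η` dominates that of `θ`. -/
def Majorizes (θ η : Fin n → ℝ) : Prop :=
  (∑ i, θ i = ∑ i, η i) ∧ ∀ l : ℕ, l ≤ n → psum θ l ≤ psum η l

/-- V-majorization `η ≺_V θ`. -/
def VMajorizes (θ η : Fin n → ℝ) : Prop :=
  ∃ (θt : Fin n → ℝ) (k₁ k₂ : ℕ), 1 ≤ k₁ ∧ k₁ ≤ n ∧ 1 ≤ k₂ ∧ k₂ ≤ n ∧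
    Majorizes θt η ∧
    (∀ i : Fin n, (i : ℕ) + 1 ≤ k₁ → sortv θ i ≤ sortv θt i ∧ sortv θt i ≤ sortv η i) ∧
    (∀ i : Fin n, k₁ < (i : ℕ) + 1 → (i : ℕ) + 1 < k₂ → sortv θ i = sortv θt i) ∧
    (∀ i : Fin n, k₂ ≤ (i : ℕ) + 1 → sortv η i ≤ sortv θt i ∧ sortv θt i ≤ sortv θ i)

lemma sum_filter_lt_zero' (g : Fin n → ℝ) :
    ∑ i ∈ Finset.univ.filter (fun i : Fin n => (i : ℕ) < 0), g i = 0 := by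
  rw [Finset.filter_false_of_mem] <;> simp

lemma sum_filter_lt_succ (g : Fin n → ℝ) {l : ℕ} (hl : l < n) :
    ∑ i ∈ Finset.univ.filter (fun i : Fin n => (i : ℕ) < l + 1), g i
      = (∑ i ∈ Finset.univ.filter (fun i : Fin n => (i : ℕ) < l), g i) + g ⟨l, hl⟩ := by
  have h : Finset.univ.filter (fun i : Fin n => (i : ℕ) < l + 1)
      = insert (⟨l, hl⟩ : Fin n) (Finset.univ.filter (fun i : Fin n => (i : ℕ) < l)) := by
    ext i
    simp only [Finset.mem_filter, Finset.mem_univ, true_and, Finset.mem_insert, Fin.ext_iff]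
    omega
  rw [h, Finset.sum_insert (by simp)]
  ring


/-- The key Abel-summation/concavity lemma: weak supermajorization is preserved by `log`. -/
lemma abel_log (a b : Fin n → ℝ) (ha : ∀ i, 0 < a i) (hb : ∀ i, 0 < b i)
    (hbmono : Monotone b)
    (hD : ∀ l : ℕ, l ≤ n →
      ∑ i ∈ Finset.univ.filter (fun i : Fin n => (i : ℕ) < l), a i
        ≤ ∑ i ∈ Finset.univ.filter (fun i : Fin n => (i : ℕ) < l), b i) :
    ∀ l : ℕ, l ≤ n →
      ∑ i ∈ Finset.univ.filter (fun i : Fin n => (i : ℕ) < l), Real.log (a i)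
        ≤ ∑ i ∈ Finset.univ.filter (fun i : Fin n => (i : ℕ) < l), Real.log (b i) := by
  set w : ℕ → ℝ := fun l => if h : l < n then 1 / b ⟨l, h⟩ else 0 with hw
  set D : ℕ → ℝ := fun l =>
    ∑ i ∈ Finset.univ.filter (fun i : Fin n => (i : ℕ) < l), (b i - a i) with hDdef
  have hDnn : ∀ l : ℕ, l ≤ n → 0 ≤ D l := by
    intro l hl
    have := hD l hl
    simp only [hDdef, Finset.sum_sub_distrib]
    linarith
  have hwnn : ∀ l : ℕ, 0 ≤ w l := by
    intro l
    simp only [hw]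
    split
    · rename_i h; have := hb ⟨l, h⟩; positivity
    · exact le_refl 0
  -- the Abel induction
  have key : ∀ l : ℕ, l ≤ n →
      w l * D l ≤ ∑ i ∈ Finset.univ.filter (fun i : Fin n => (i : ℕ) < l),
        (b i - a i) / b i := by
    intro l
    induction l with
    | zero =>
      intro _
      rw [sum_filter_lt_zero']
      simp [hDdef, sum_filter_lt_zero']
    | succ l ih =>
      intro hl
      have hln : l < n := hl
      have hstep := sum_filter_lt_succ (g := fun i => (b i - a i) / b i) hln
      have hDstep : D (l + 1) = D l + (b ⟨l, hln⟩ - a ⟨l, hln⟩) := by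
        simp only [hDdef]
        exact sum_filter_lt_succ (g := fun i => b i - a i) hln
      have hbl : 0 < b ⟨l, hln⟩ := hb _
      have h1 : w l * D l ≤ ∑ i ∈ Finset.univ.filter (fun i : Fin n => (i : ℕ) < l),
          (b i - a i) / b i := ih (Nat.le_of_succ_le hl)
      have hwl : 1 / b ⟨l, hln⟩ ≤ w l := by
        simp only [hw]
        rw [dif_pos hln]
      have h2 : (1 / b ⟨l, hln⟩) * D (l + 1)
          ≤ w l * D l + (b ⟨l, hln⟩ - a ⟨l, hln⟩) / b ⟨l, hln⟩ := by
        rw [hDstep, mul_add]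
        have hDl : 0 ≤ D l := hDnn l (Nat.le_of_succ_le hl)
        have : (1 / b ⟨l, hln⟩) * D l ≤ w l * D l := by
          apply mul_le_mul_of_nonneg_right _ hDl
          simp only [hw]; rw [dif_pos hln]
        have heq : (1 / b ⟨l, hln⟩) * (b ⟨l, hln⟩ - a ⟨l, hln⟩)
            = (b ⟨l, hln⟩ - a ⟨l, hln⟩) / b ⟨l, hln⟩ := by
          field_simp
        linarith [this, heq.le, heq.ge]
      have h3 : w (l + 1) * D (l + 1) ≤ (1 / b ⟨l, hln⟩) * D (l + 1) := by
        apply mul_le_mul_of_nonneg_right _ (hDnn (l + 1) hl)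
        simp only [hw]
        split
        · rename_i hl1
          have hmono : b ⟨l, hln⟩ ≤ b ⟨l + 1, hl1⟩ := hbmono (by simp [Fin.le_def])
          exact one_div_le_one_div_of_le hbl hmono
        · positivity
      calc w (l + 1) * D (l + 1) ≤ (1 / b ⟨l, hln⟩) * D (l + 1) := h3
        _ ≤ w l * D l + (b ⟨l, hln⟩ - a ⟨l, hln⟩) / b ⟨l, hln⟩ := h2
        _ ≤ _ := by rw [hstep]; linarith [h1]
  -- conclude
  intro l hl
  have h1 : ∑ i ∈ Finset.univ.filter (fun i : Fin n => (i : ℕ) < l), (b i - a i) / b i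
      ≤ ∑ i ∈ Finset.univ.filter (fun i : Fin n => (i : ℕ) < l),
        (Real.log (b i) - Real.log (a i)) := by
    apply Finset.sum_le_sum
    intro i _
    have hai := ha i
    have hbi := hb i
    have hlog := Real.log_le_sub_one_of_pos (x := a i / b i) (by positivity)
    rw [Real.log_div (ne_of_gt hai) (ne_of_gt hbi)] at hlog
    have : (b i - a i) / b i = 1 - a i / b i := by field_simp
    rw [this]
    linarith
  have h0 : (0:ℝ) ≤ w l * D l := mul_nonneg (hwnn l) (hDnn l hl)
  have := key l hl
  rw [Finset.sum_sub_distrib] at h1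
  linarith

theorem stmt_15 (θ η : Fin n → ℝ) (hθpos : ∀ i, 0 < θ i) (hηpos : ∀ i, 0 < η i)
    (hV : VMajorizes θ η) (hprod : 1 ≤ ∏ i, η i / θ i) :
    ∀ l : ℕ, l ≤ n →
      (∑ i ∈ Finset.univ.filter (fun i : Fin n => (i : ℕ) < l), Real.log (sortv θ i)) ≤
      (∑ i ∈ Finset.univ.filter (fun i : Fin n => (i : ℕ) < l), Real.log (sortv η i)) := by
  obtain ⟨θt, k₁, k₂, hk₁1, hk₁n, hk₂1, hk₂n, hMaj, hlow, hmid, hhigh⟩ := hV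
  -- notation
  set a : Fin n → ℝ := sortv θt with hadef
  set b : Fin n → ℝ := sortv η with hbdef
  set c : Fin n → ℝ := sortv θ with hcdef
  have hbpos : ∀ i, 0 < b i := fun i => hηpos _
  have hcpos : ∀ i, 0 < c i := fun i => hθpos _
  have hapos : ∀ i, 0 < a i := by
    intro i
    rcases lt_or_ge ((i : ℕ) + 1) k₂ with h2 | h2
    · rcases le_or_gt ((i : ℕ) + 1) k₁ with h1 | h1
      · exact lt_of_lt_of_le (hcpos i) (hlow i h1).1
      · rw [← hmid i h1 h2]; exact hcpos i
    · exact lt_of_lt_of_le (hbpos i) (hhigh i h2).1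
  have hbmono : Monotone b := Tuple.monotone_sort η
  -- total log sums
  have hsortsum : ∀ v : Fin n → ℝ, ∑ i, Real.log (sortv v i) = ∑ i, Real.log (v i) := by
    intro v
    exact Equiv.sum_comp (Tuple.sort v) (fun i => Real.log (v i))
  have htot : ∑ i, Real.log (θ i) ≤ ∑ i, Real.log (η i) := by
    have h0 : (0:ℝ) ≤ Real.log (∏ i, η i / θ i) := Real.log_nonneg hprod
    rw [Real.log_prod (fun i _ => by
      have := hηpos i; have := hθpos i; positivity)] at h0
    have heq : ∀ i : Fin n, Real.log (η i / θ i) = Real.log (η i) - Real.log (θ i) :=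
      fun i => Real.log_div (ne_of_gt (hηpos i)) (ne_of_gt (hθpos i))
    rw [Finset.sum_congr rfl (fun i _ => heq i), Finset.sum_sub_distrib] at h0
    linarith
  have htots : ∑ i, Real.log (c i) ≤ ∑ i, Real.log (b i) := by
    rw [hbdef, hcdef, hsortsum, hsortsum]; exact htot
  -- abel_log applied to a ≤ b partial sums
  have hab : ∀ l : ℕ, l ≤ n →
      ∑ i ∈ Finset.univ.filter (fun i : Fin n => (i : ℕ) < l), Real.log (a i)
        ≤ ∑ i ∈ Finset.univ.filter (fun i : Fin n => (i : ℕ) < l), Real.log (b i) :=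
    abel_log a b hapos hbpos hbmono hMaj.2
  intro l hl
  rcases lt_or_ge l k₂ with hcase | hcase
  · -- low/middle region: termwise c ≤ a, then abel_log
    have hterm : ∀ i ∈ Finset.univ.filter (fun i : Fin n => (i : ℕ) < l),
        Real.log (c i) ≤ Real.log (a i) := by
      intro i hi
      simp only [Finset.mem_filter] at hi
      have hik : (i : ℕ) + 1 < k₂ := by omega
      have hca : c i ≤ a i := by
        rcases le_or_gt ((i : ℕ) + 1) k₁ with h1 | h1
        · exact (hlow i h1).1
        · exact (hmid i h1 hik).le
      exact Real.log_le_log (hcpos i) hca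
    calc ∑ i ∈ Finset.univ.filter (fun i : Fin n => (i : ℕ) < l), Real.log (c i)
        ≤ ∑ i ∈ Finset.univ.filter (fun i : Fin n => (i : ℕ) < l), Real.log (a i) :=
          Finset.sum_le_sum hterm
      _ ≤ _ := hab l hl
  · -- high region: complement termwise b ≤ c plus total inequality
    have hsplitc := Finset.sum_filter_add_sum_filter_not Finset.univ
      (fun i : Fin n => (i : ℕ) < l) (fun i => Real.log (c i))
    have hsplitb := Finset.sum_filter_add_sum_filter_not Finset.univ
      (fun i : Fin n => (i : ℕ) < l) (fun i => Real.log (b i))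
    have hterm : ∑ i ∈ Finset.univ.filter (fun i : Fin n => ¬ (i : ℕ) < l), Real.log (b i)
        ≤ ∑ i ∈ Finset.univ.filter (fun i : Fin n => ¬ (i : ℕ) < l), Real.log (c i) := by
      apply Finset.sum_le_sum
      intro i hi
      simp only [Finset.mem_filter, not_lt] at hi
      have hik : k₂ ≤ (i : ℕ) + 1 := by omega
      have hbc : b i ≤ c i := le_trans (hhigh i hik).1 (hhigh i hik).2
      exact Real.log_le_log (hbpos i) hbc
    linarith
end

section
/- Let n = 3, α = 1, θ = (1, 6, 10), η = (4, 5, 10), and X₁, X₂, X₃ iid Exponential(1). Then P(X₁ + 6X₂ + 10X₃ ≤ x) ≥ P(4X₁ + 5X₂ + 10X₃ ≤ x) for all x ≥ 0, i.e., the distribution functions never cross. -/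
open MeasureTheory ProbabilityTheory
open Real Set

namespace S16

noncomputable def W (lam y : ℝ) : ℝ := if 0 ≤ y then Real.exp (-(y/lam)) else 0
noncomputable def E0 (a y : ℝ) : ℝ := if 0 ≤ y then 1 - Real.exp (-(y/a)) else 0
noncomputable def EE (a lam y : ℝ) : ℝ :=
  if 0 ≤ y then (lam/(lam-a)) * (Real.exp (-(y/lam)) - Real.exp (-(y/a))) else 0

lemma meas_W (lam : ℝ) : Measurable (W lam) := by
  unfold W; exact Measurable.ite measurableSet_Ici (by fun_prop) measurable_const

lemma meas_E0 (a : ℝ) : Measurable (E0 a) := by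
  unfold E0; exact Measurable.ite measurableSet_Ici (by fun_prop) measurable_const

lemma meas_EE (a lam : ℝ) : Measurable (EE a lam) := by
  unfold EE; exact Measurable.ite measurableSet_Ici (by fun_prop) measurable_const

lemma W_nonneg (lam y : ℝ) : 0 ≤ W lam y := by
  unfold W; split <;> positivity

lemma W_le_one (lam y : ℝ) (hlam : 0 < lam) : W lam y ≤ 1 := by
  unfold W; split
  · rw [Real.exp_le_one_iff]
    rename_i h
    rw [neg_nonpos]
    positivity
  · norm_num

lemma E0_nonneg (a y : ℝ) (ha : 0 < a) : 0 ≤ E0 a y := by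
  unfold E0; split
  · rename_i h
    have : Real.exp (-(y/a)) ≤ 1 := by
      rw [Real.exp_le_one_iff, neg_nonpos]; positivity
    linarith
  · exact le_refl 0

lemma E0_le_one (a y : ℝ) : E0 a y ≤ 1 := by
  unfold E0; split
  · have := Real.exp_pos (-(y/a)); linarith
  · norm_num

end S16
namespace S16

-- generic splitting helper
lemma split_Ioi {f : ℝ → ℝ} (T : ℝ) (hT : 0 ≤ T)
    (h1 : IntegrableOn f (Ioc 0 T)) (h2 : IntegrableOn f (Ioi T)) :
    ∫ s in Ioi (0:ℝ), f s = (∫ s in Ioc 0 T, f s) + ∫ s in Ioi T, f s := by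
  rw [← Ioc_union_Ioi_eq_Ioi hT]
  exact setIntegral_union (Ioc_disjoint_Ioi le_rfl) measurableSet_Ioi h1 h2

lemma exp_antideriv {k : ℝ} (hk : k ≠ 0) (T : ℝ) :
    ∫ s in (0:ℝ)..T, Real.exp (-(k*s)) = (1 - Real.exp (-(k*T)))/k := by
  have h : ∀ s : ℝ, HasDerivAt (fun z => -(1/k) * Real.exp (-(k*z))) (Real.exp (-(k*s))) s := by
    intro s
    have h1 : HasDerivAt (fun z : ℝ => -(k*z)) (-k) s := by
      have h0 := ((hasDerivAt_id s).const_mul k).neg; simp only [mul_one] at h0; exact h0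
    have := (h1.exp).const_mul (-(1/k))
    rw [show (-(1/k)) * (Real.exp (-(k*s)) * -k) = Real.exp (-(k*s)) by field_simp] at this
    exact this
  rw [intervalIntegral.integral_eq_sub_of_hasDerivAt (fun s _ => h s)
    (Continuous.intervalIntegrable (by fun_prop) 0 T)]
  field_simp
  rw [mul_zero, neg_zero, Real.exp_zero]; ring

end S16
namespace S16

lemma integrable_piece {g : ℝ → ℝ} (hg : Measurable g) {C : ℝ} (hC : ∀ z, |g z| ≤ C) (a y : ℝ) :
    IntegrableOn (fun s => Real.exp (-s) * g (y - a*s)) (Ioi (0:ℝ)) := by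
  have hbase : IntegrableOn (fun s : ℝ => C * Real.exp (-s)) (Ioi (0:ℝ)) := by
    have := (exp_neg_integrableOn_Ioi 0 one_pos).const_mul C
    simpa [IntegrableOn] using this
  apply Integrable.mono hbase
  · exact ((measurable_exp.comp measurable_neg).mul
      (hg.comp (measurable_const.sub (measurable_id.const_mul a)))).aestronglyMeasurable
  · filter_upwards with s
    have h1 : |g (y - a*s)| ≤ C := hC _
    have h0 : (0:ℝ) ≤ C := le_trans (abs_nonneg _) h1
    simp only [norm_mul, Real.norm_eq_abs, abs_exp, abs_mul]
    calc Real.exp (-s) * |g (y - a*s)| ≤ Real.exp (-s) * C := by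
          exact mul_le_mul_of_nonneg_left h1 (Real.exp_pos _).le
      _ ≤ |C| * Real.exp (-s) := by rw [mul_comm]; gcongr; exact le_abs_self C

lemma core00 {a : ℝ} (ha : 0 < a) (y : ℝ) :
    ∫ s in Ioi (0:ℝ), Real.exp (-s) * (if 0 ≤ y - a*s then (1:ℝ) else 0) = E0 a y := by
  have hint : IntegrableOn (fun s => Real.exp (-s) * (if 0 ≤ y - a*s then (1:ℝ) else 0))
      (Ioi (0:ℝ)) := by
    apply integrable_piece (g := fun z => if 0 ≤ z then (1:ℝ) else 0)
      (Measurable.ite measurableSet_Ici measurable_const measurable_const) (C := 1)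
    intro z; split <;> norm_num
  by_cases hy : 0 ≤ y
  · have hT : 0 ≤ y/a := by positivity
    rw [split_Ioi (y/a) hT (hint.mono_set (Ioc_subset_Ioi_self)) (hint.mono_set
      (Ioi_subset_Ioi hT))]
    have h2 : ∫ s in Ioi (y/a), Real.exp (-s) * (if 0 ≤ y - a*s then (1:ℝ) else 0) = 0 := by
      rw [setIntegral_congr_fun measurableSet_Ioi (g := fun _ => (0:ℝ))]
      · simp
      · intro s hs
        have : y - a*s < 0 := by
          have : y/a < s := hs
          have := (div_lt_iff₀ ha).mp this
          linarith
        simp [not_le.mpr this]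
    have h1 : ∫ s in Ioc 0 (y/a), Real.exp (-s) * (if 0 ≤ y - a*s then (1:ℝ) else 0)
        = 1 - Real.exp (-(y/a)) := by
      rw [setIntegral_congr_fun measurableSet_Ioc (g := fun s => Real.exp (-s))]
      · rw [← intervalIntegral.integral_of_le hT]
        have := exp_antideriv (k := 1) one_ne_zero (y/a)
        simpa using this
      · intro s hs
        have hle : a * s ≤ y := by
          have h2' := hs.2
          have : a * (y/a) = y := by field_simp
          nlinarith
        simp only
        rw [if_pos (by linarith), mul_one]
    rw [h1, h2, add_zero, E0, if_pos hy]
  · rw [setIntegral_congr_fun measurableSet_Ioi (g := fun _ => (0:ℝ))]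
    · simp [E0, hy]
    · intro s hs
      have hs' : (0:ℝ) < s := hs
      have : y - a*s < 0 := by nlinarith
      simp [not_le.mpr this]

end S16
namespace S16

lemma core1 {a lam : ℝ} (ha : 0 < a) (hal : a < lam) (y : ℝ) :
    ∫ s in Ioi (0:ℝ), Real.exp (-s) * W lam (y - a*s) = EE a lam y := by
  have hlam : 0 < lam := lt_trans ha hal
  have hlam' : lam ≠ 0 := ne_of_gt hlam
  have ha' : a ≠ 0 := ne_of_gt ha
  have hint : IntegrableOn (fun s => Real.exp (-s) * W lam (y - a*s)) (Ioi (0:ℝ)) := by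
    apply integrable_piece (meas_W lam) (C := 1)
    intro z
    rw [abs_of_nonneg (W_nonneg lam z)]
    exact W_le_one lam z hlam
  by_cases hy : 0 ≤ y
  · have hT : 0 ≤ y/a := by positivity
    set k : ℝ := (lam - a)/lam with hk
    have hkpos : 0 < k := div_pos (by linarith) hlam
    rw [split_Ioi (y/a) hT (hint.mono_set (Ioc_subset_Ioi_self)) (hint.mono_set
      (Ioi_subset_Ioi hT))]
    have h2 : ∫ s in Ioi (y/a), Real.exp (-s) * W lam (y - a*s) = 0 := by
      rw [setIntegral_congr_fun measurableSet_Ioi (g := fun _ => (0:ℝ))]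
      · simp
      · intro s hs
        have : y/a < s := hs
        have := (div_lt_iff₀ ha).mp this
        have hneg : y - a*s < 0 := by linarith
        simp [W, not_le.mpr hneg]
    have h1 : ∫ s in Ioc 0 (y/a), Real.exp (-s) * W lam (y - a*s)
        = Real.exp (-(y/lam)) * ((1 - Real.exp (-(k*(y/a))))/k) := by
      rw [setIntegral_congr_fun measurableSet_Ioc
        (g := fun s => Real.exp (-(y/lam)) * Real.exp (-(k*s)))]
      · rw [← intervalIntegral.integral_of_le hT, intervalIntegral.integral_const_mul,
          exp_antideriv (ne_of_gt hkpos)]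
      · intro s hs
        have hle : a * s ≤ y := by
          have h2' := hs.2
          have : a * (y/a) = y := by field_simp
          nlinarith
        simp only [W]
        rw [if_pos (by linarith), ← Real.exp_add, ← Real.exp_add]
        congr 1
        rw [hk]
        field_simp
        ring
    rw [h1, h2, add_zero, EE, if_pos hy]
    have hexp : Real.exp (-(y/lam)) * Real.exp (-(k*(y/a))) = Real.exp (-(y/a)) := by
      rw [← Real.exp_add]
      congr 1
      rw [hk]
      field_simp
      ring
    have hkinv : (1:ℝ)/k = lam/(lam-a) := by
      rw [hk, one_div_div]
    have hsplit : Real.exp (-(y/lam)) * ((1 - Real.exp (-(k*(y/a))))/k)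
        = (1/k) * (Real.exp (-(y/lam)) - Real.exp (-(y/lam)) * Real.exp (-(k*(y/a)))) := by
      ring
    rw [hsplit, hexp, hkinv]
  · rw [setIntegral_congr_fun measurableSet_Ioi (g := fun _ => (0:ℝ))]
    · simp [EE, hy]
    · intro s hs
      have hs' : (0:ℝ) < s := hs
      have hneg : y - a*s < 0 := by nlinarith
      simp [W, not_le.mpr hneg]

end S16
namespace S16

lemma integrable_ind (a y : ℝ) :
    IntegrableOn (fun s => Real.exp (-s) * (if 0 ≤ y - a*s then (1:ℝ) else 0)) (Ioi (0:ℝ)) := by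
  apply integrable_piece (g := fun z => if 0 ≤ z then (1:ℝ) else 0)
    (Measurable.ite measurableSet_Ici measurable_const measurable_const) (C := 1)
  intro z; split <;> norm_num

lemma integrable_W {lam : ℝ} (hlam : 0 < lam) (a y : ℝ) :
    IntegrableOn (fun s => Real.exp (-s) * W lam (y - a*s)) (Ioi (0:ℝ)) := by
  apply integrable_piece (meas_W lam) (C := 1)
  intro z
  rw [abs_of_nonneg (W_nonneg lam z)]
  exact W_le_one lam z hlam

lemma mid {b c : ℝ} (hb : 0 < b) (hbc : b < c) (y : ℝ) :
    ∫ t in Ioi (0:ℝ), Real.exp (-t) * E0 c (y - b*t) = E0 b y - EE b c y := by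
  have hpt : ∀ z, E0 c z = (if 0 ≤ z then (1:ℝ) else 0) - W c z := by
    intro z; unfold E0 W; split <;> simp
  have : (fun t => Real.exp (-t) * E0 c (y - b*t))
      = fun t => Real.exp (-t) * (if 0 ≤ y - b*t then (1:ℝ) else 0)
        - Real.exp (-t) * W c (y - b*t) := by
    funext t; rw [hpt]; ring
  rw [this, integral_sub (integrable_ind b y) (integrable_W (lt_trans hb hbc) b y),
    core00 hb y, core1 hb hbc y]

noncomputable def Phi (b c y : ℝ) : ℝ := E0 b y - EE b c y

noncomputable def Fc (a b c x : ℝ) : ℝ :=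
  E0 a x + (c/(c-b) - 1) * EE a b x - (c/(c-b)) * EE a c x

lemma outer {a b c : ℝ} (ha : 0 < a) (hab : a < b) (hbc : b < c) (x : ℝ) :
    ∫ s in Ioi (0:ℝ), Real.exp (-s) * Phi b c (x - a*s) = Fc a b c x := by
  have hcb : c - b ≠ 0 := by linarith
  have hpt : ∀ z, Phi b c z = (if 0 ≤ z then (1:ℝ) else 0)
      + (c/(c-b) - 1) * W b z - (c/(c-b)) * W c z := by
    intro z
    unfold Phi E0 EE W
    split
    · field_simp
      ring
    · simp
  have heq : (fun s => Real.exp (-s) * Phi b c (x - a*s))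
      = fun s => (Real.exp (-s) * (if 0 ≤ x - a*s then (1:ℝ) else 0)
        + (c/(c-b) - 1) * (Real.exp (-s) * W b (x - a*s)))
        - (c/(c-b)) * (Real.exp (-s) * W c (x - a*s)) := by
    funext s; rw [hpt]; ring
  have h1 := integral_sub (μ := volume.restrict (Ioi (0:ℝ)))
    (f := fun s => (Real.exp (-s) * (if 0 ≤ x - a*s then (1:ℝ) else 0)
        + (c/(c-b) - 1) * (Real.exp (-s) * W b (x - a*s))))
    (g := fun s => (c/(c-b)) * (Real.exp (-s) * W c (x - a*s)))
    (Integrable.add (integrable_ind a x) ((integrable_W (by linarith) a x).const_mul _))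
    ((integrable_W (by linarith) a x).const_mul _)
  have h2 := integral_add (μ := volume.restrict (Ioi (0:ℝ)))
    (f := fun s => Real.exp (-s) * (if 0 ≤ x - a*s then (1:ℝ) else 0))
    (g := fun s => (c/(c-b) - 1) * (Real.exp (-s) * W b (x - a*s)))
    (integrable_ind a x) ((integrable_W (by linarith) a x).const_mul _)
  rw [heq, h1, h2, integral_const_mul, integral_const_mul,
    core00 ha x, core1 ha hab x, core1 ha (by linarith) x]
  rfl

end S16
namespace S16

lemma exp_apply_Iic (w : ℝ) :
    expMeasure 1 (Iic w) = ENNReal.ofReal (if 0 ≤ w then 1 - Real.exp (-w) else 0) := by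
  rw [expMeasure, gammaMeasure, withDensity_apply _ measurableSet_Iic]
  have := lintegral_exponentialPDF_eq_antiDeriv one_pos w
  simp only [one_mul] at this
  exact this

lemma step5 {c : ℝ} (hc : 0 < c) (z : ℝ) :
    expMeasure 1 {u : ℝ | c*u ≤ z} = ENNReal.ofReal (E0 c z) := by
  have hset : {u : ℝ | c*u ≤ z} = Iic (z/c) := by
    ext u
    simp [mem_Iic, le_div_iff₀ hc, mul_comm]
  rw [hset, exp_apply_Iic, E0]
  congr 1
  have hiff : 0 ≤ z/c ↔ 0 ≤ z := by
    constructor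
    · intro h; nlinarith [(div_le_iff₀ hc).mp (le_of_eq (rfl : z/c = z/c)), mul_nonneg h hc.le,
        (mul_comm c (z/c)) ▸ (div_mul_cancel₀ z (ne_of_gt hc))]
    · intro h; positivity
  split_ifs with h1 h2
  · rfl
  · exact absurd (hiff.mp h1) h2
  · exact absurd (hiff.mpr ‹_›) h1
  · rfl

end S16
namespace S16

lemma lint (f : ℝ → ℝ) (hf : Measurable f) (h0 : ∀ y, 0 ≤ f y) (h1 : ∀ y, f y ≤ 1) :
    ∫⁻ t, ENNReal.ofReal (f t) ∂(expMeasure 1)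
      = ENNReal.ofReal (∫ t in Ioi (0:ℝ), Real.exp (-t) * f t) := by
  have hmeasPDF : Measurable (exponentialPDF 1) :=
    (measurable_exponentialPDFReal 1).ennreal_ofReal
  rw [expMeasure, gammaMeasure]
  have hpdf : gammaPDF 1 1 = exponentialPDF 1 := rfl
  rw [hpdf, lintegral_withDensity_eq_lintegral_mul _ hmeasPDF hf.ennreal_ofReal]
  have hptw : ∀ t : ℝ, (exponentialPDF 1 * fun t => ENNReal.ofReal (f t)) t
      = ENNReal.ofReal (Set.indicator (Ici (0:ℝ)) (fun t => Real.exp (-t) * f t) t) := by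
    intro t
    simp only [Pi.mul_apply]
    by_cases ht : 0 ≤ t
    · rw [exponentialPDF_of_nonneg ht, Set.indicator_of_mem (mem_Ici.mpr ht),
        ← ENNReal.ofReal_mul (by positivity)]
      norm_num
    · rw [exponentialPDF_of_neg (not_le.mp ht), Set.indicator_of_notMem (by simpa using ht)]
      simp
  rw [lintegral_congr hptw]
  have hind : Integrable (Set.indicator (Ici (0:ℝ)) (fun t => Real.exp (-t) * f t)) := by
    rw [integrable_indicator_iff measurableSet_Ici]
    have hbase : IntegrableOn (fun t : ℝ => Real.exp (-t)) (Ici (0:ℝ)) := by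
      rw [integrableOn_Ici_iff_integrableOn_Ioi]
      simpa using exp_neg_integrableOn_Ioi 0 one_pos
    apply Integrable.mono hbase
    · exact ((measurable_exp.comp measurable_neg).mul hf).aestronglyMeasurable
    · filter_upwards with t
      rw [Real.norm_eq_abs, Real.norm_eq_abs, abs_mul, abs_exp]
      rw [abs_of_nonneg (h0 t)]
      nlinarith [Real.exp_pos (-t), h1 t, h0 t]
  rw [← ofReal_integral_eq_lintegral_ofReal hind]
  · congr 1
    rw [integral_indicator measurableSet_Ici, integral_Ici_eq_integral_Ioi]
  · filter_upwards with t
    apply Set.indicator_nonneg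
    intro y _
    exact mul_nonneg (Real.exp_pos _).le (h0 y)

end S16
namespace S16

lemma EE_nonneg {b c : ℝ} (hb : 0 < b) (hbc : b < c) (y : ℝ) : 0 ≤ EE b c y := by
  unfold EE
  split
  · rename_i hy
    have h1 : y/c ≤ y/b := by
      rw [div_le_div_iff₀ (by linarith) hb]
      nlinarith
    have h2 : Real.exp (-(y/b)) ≤ Real.exp (-(y/c)) := Real.exp_le_exp.mpr (by linarith)
    have h3 : (0:ℝ) ≤ c/(c-b) := div_nonneg (by linarith) (by linarith)
    nlinarith
  · exact le_refl 0

lemma Phi_le_one {b c : ℝ} (hb : 0 < b) (hbc : b < c) (y : ℝ) : Phi b c y ≤ 1 := by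
  have := EE_nonneg hb hbc y
  have := E0_le_one b y
  unfold Phi
  linarith

lemma Phi_meas (b c : ℝ) : Measurable (Phi b c) := (meas_E0 b).sub (meas_EE b c)

lemma Phi_nonneg_1 (y : ℝ) : 0 ≤ Phi 5 10 y := by
  unfold Phi E0 EE
  split
  · rename_i hy
    set v := Real.exp (-(y/10)) with hv
    have hv2 : Real.exp (-(y/5)) = v^2 := by
      rw [hv, ← Real.exp_nat_mul]
      norm_num
      ring_nf
    rw [hv2]
    norm_num
    nlinarith [sq_nonneg (1-v)]
  · simp

lemma Phi_nonneg_2 (y : ℝ) : 0 ≤ Phi 6 10 y := by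
  unfold Phi E0 EE
  split
  · rename_i hy
    set v := Real.exp (-(y/30)) with hv
    have hv5 : Real.exp (-(y/6)) = v^5 := by
      rw [hv, ← Real.exp_nat_mul]
      norm_num
      ring_nf
    have hv3 : Real.exp (-(y/10)) = v^3 := by
      rw [hv, ← Real.exp_nat_mul]
      norm_num
      ring_nf
    rw [hv5, hv3]
    have hvpos : 0 < v := Real.exp_pos _
    have key : 3*v^5 - 5*v^3 + 2 = (1-v)^2*(3*v^3+6*v^2+4*v+2) := by ring
    norm_num
    nlinarith [sq_nonneg (1-v), mul_nonneg (sq_nonneg (1-v))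
      (by positivity : (0:ℝ) ≤ 3*v^3+6*v^2+4*v+2)]
  · simp

end S16
namespace S16

lemma main_comp {Ω : Type*} [MeasureSpace Ω] [IsProbabilityMeasure (ℙ : Measure Ω)]
    (X : Fin 3 → Ω → ℝ) (hmeas : ∀ i, Measurable (X i))
    (hindep : iIndepFun X ℙ)
    (hlaw : ∀ i, Measure.map (X i) ℙ = expMeasure 1)
    {a b c : ℝ} (ha : 0 < a) (hab : a < b) (hbc : b < c)
    (hPhi0 : ∀ y, 0 ≤ Phi b c y) (x : ℝ) :
    ℙ {ω | a * X 0 ω + b * X 1 ω + c * X 2 ω ≤ x} = ENNReal.ofReal (Fc a b c x) := by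
  set μ : Measure ℝ := expMeasure 1 with hμ
  haveI : IsProbabilityMeasure μ := isProbabilityMeasure_expMeasure one_pos
  have hb : 0 < b := lt_trans ha hab
  have hc : 0 < c := lt_trans hb hbc
  -- joint law
  have h12 : IndepFun (X 1) (X 2) ℙ := hindep.indepFun (show (1:Fin 3) ≠ 2 by decide)
  have m12 : Measure.map (fun ω => (X 1 ω, X 2 ω)) ℙ = μ.prod μ := by
    have h := (indepFun_iff_map_prod_eq_prod_map_map (hmeas 1).aemeasurable
      (hmeas 2).aemeasurable).mp h12
    rw [hlaw 1, hlaw 2] at h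
    exact h
  have h012 : IndepFun (X 0) (fun ω => (X 1 ω, X 2 ω)) ℙ :=
    (hindep.indepFun_prodMk hmeas 1 2 0 (by decide) (by decide)).symm
  have hmap : Measure.map (fun ω => (X 0 ω, (X 1 ω, X 2 ω))) ℙ = μ.prod (μ.prod μ) := by
    have h := (indepFun_iff_map_prod_eq_prod_map_map (hmeas 0).aemeasurable
      ((hmeas 1).prodMk (hmeas 2)).aemeasurable).mp h012
    rw [hlaw 0, m12] at h
    exact h
  -- reduce to product measure
  set S : Set (ℝ × ℝ × ℝ) := {p | a * p.1 + b * p.2.1 + c * p.2.2 ≤ x} with hSdef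
  have hS : MeasurableSet S := measurableSet_le (by fun_prop) measurable_const
  have hpre : {ω | a * X 0 ω + b * X 1 ω + c * X 2 ω ≤ x}
      = (fun ω => (X 0 ω, (X 1 ω, X 2 ω))) ⁻¹' S := rfl
  rw [hpre, ← Measure.map_apply ((hmeas 0).prodMk ((hmeas 1).prodMk (hmeas 2))) hS, hmap]
  -- first Fubini
  rw [Measure.prod_apply hS]
  have hslice : ∀ s : ℝ, (μ.prod μ) (Prod.mk s ⁻¹' S) = ENNReal.ofReal (Phi b c (x - a*s)) := by
    intro s
    have hset : Prod.mk s ⁻¹' S = {q : ℝ × ℝ | b * q.1 + c * q.2 ≤ x - a*s} := by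
      ext q; simp [hSdef]; constructor <;> intro h <;> linarith
    have hS2 : MeasurableSet {q : ℝ × ℝ | b * q.1 + c * q.2 ≤ x - a*s} :=
      measurableSet_le (by fun_prop) measurable_const
    rw [hset, Measure.prod_apply hS2]
    have hslice2 : ∀ t : ℝ, μ (Prod.mk t ⁻¹' {q : ℝ × ℝ | b * q.1 + c * q.2 ≤ x - a*s})
        = ENNReal.ofReal (E0 c (x - a*s - b*t)) := by
      intro t
      have : Prod.mk t ⁻¹' {q : ℝ × ℝ | b * q.1 + c * q.2 ≤ x - a*s}
          = {u : ℝ | c * u ≤ x - a*s - b*t} := by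
        ext u; simp; constructor <;> intro h <;> linarith
      rw [this, hμ, step5 hc]
    rw [lintegral_congr hslice2, hμ,
      lint (fun t => E0 c (x - a*s - b*t)) ((meas_E0 c).comp (by fun_prop))
        (fun t => E0_nonneg c _ hc) (fun t => E0_le_one c _)]
    congr 1
    unfold Phi
    rw [← mid hb hbc (x - a*s)]
  rw [lintegral_congr hslice, hμ,
    lint (fun s => Phi b c (x - a*s)) ((Phi_meas b c).comp (by fun_prop))
      (fun s => hPhi0 _) (fun s => Phi_le_one hb hbc _)]
  congr 1
  exact outer ha hab hbc x

end S16
namespace S16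

lemma Fc_le (x : ℝ) (hx : 0 ≤ x) : Fc 4 5 10 x ≤ Fc 1 6 10 x := by
  unfold Fc E0 EE
  simp only [if_pos hx]
  set u := Real.exp (-(x/60)) with hu
  have hmk : ∀ n : ℕ, ∀ r : ℝ, (n:ℝ) * (-(x/60)) = -(x/r) → Real.exp (-(x/r)) = u^n := by
    intro n r h
    rw [hu, ← Real.exp_nat_mul, h]
  have h4 : Real.exp (-(x/4)) = u^15 := hmk 15 4 (by push_cast; ring)
  have h5 : Real.exp (-(x/5)) = u^12 := hmk 12 5 (by push_cast; ring)
  have h10 : Real.exp (-(x/10)) = u^6 := hmk 6 10 (by push_cast; ring)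
  have h6 : Real.exp (-(x/6)) = u^10 := hmk 10 6 (by push_cast; ring)
  have h1 : Real.exp (-(x/1)) = u^60 := hmk 60 1 (by push_cast; ring)
  rw [h4, h5, h10, h6, h1]
  have hu0 : 0 < u := Real.exp_pos _
  have hu1 : u ≤ 1 := by
    rw [hu]
    apply Real.exp_le_one_iff.mpr
    rw [neg_nonpos]
    positivity
  have hP : 0 ≤ u^6 * (1-u)^3 * (25 + 75*u + 150*u^2 + 250*u^3 + 456*u^4 + 768*u^5 + 961*u^6 + 1035*u^7 + 990*u^8 + 946*u^9 + 903*u^10 + 861*u^11 + 820*u^12 + 780*u^13 + 741*u^14 + 703*u^15 + 666*u^16 + 630*u^17 + 595*u^18 + 561*u^19 + 528*u^20 + 496*u^21 + 465*u^22 + 435*u^23 + 406*u^24 + 378*u^25 + 351*u^26 + 325*u^27 + 300*u^28 + 276*u^29 + 253*u^30 + 231*u^31 + 210*u^32 + 190*u^33 + 171*u^34 + 153*u^35 + 136*u^36 + 120*u^37 + 105*u^38 + 91*u^39 + 78*u^40 + 66*u^41 + 55*u^42 + 45*u^43 + 36*u^44 + 28*u^45 + 21*u^46 + 15*u^47 +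 10*u^48 + 6*u^49 + 3*u^50 + 1*u^51) := by
    apply mul_nonneg (mul_nonneg (by positivity) (by nlinarith [pow_nonneg (by linarith : (0:ℝ) ≤ 1-u) 3])) (by positivity)
  have hkey : u^6 * (1-u)^3 * (25 + 75*u + 150*u^2 + 250*u^3 + 456*u^4 + 768*u^5 + 961*u^6 + 1035*u^7 + 990*u^8 + 946*u^9 + 903*u^10 + 861*u^11 + 820*u^12 + 780*u^13 + 741*u^14 + 703*u^15 + 666*u^16 + 630*u^17 + 595*u^18 + 561*u^19 + 528*u^20 + 496*u^21 + 465*u^22 + 435*u^23 + 406*u^24 + 378*u^25 + 351*u^26 + 325*u^27 + 300*u^28 + 276*u^29 + 253*u^30 + 231*u^31 + 210*u^32 + 190*u^33 + 171*u^34 + 153*u^35 + 136*u^36 + 120*u^37 + 105*u^38 + 91*u^39 + 78*u^40 + 66*u^41 + 55*u^42 + 45*u^43 + 36*u^44 + 28*u^45 + 21*u^46 + 15*u^47 + 10*u^48 + 6*u^49 + 3*u^50 + 1*u^51)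
      = 120*u^15 - 225*u^12 + 81*u^10 + 25*u^6 - u^60 := by ring
  rw [hkey] at hP
  nlinarith [hP]

end S16

theorem stmt_16 {Ω : Type*} [MeasureSpace Ω] [IsProbabilityMeasure (ℙ : Measure Ω)]
    (X : Fin 3 → Ω → ℝ) (hmeas : ∀ i, Measurable (X i))
    (hindep : iIndepFun X ℙ)
    (hlaw : ∀ i, Measure.map (X i) ℙ = expMeasure 1) :
    ∀ x : ℝ, 0 ≤ x →
      ℙ {ω | 4 * X 0 ω + 5 * X 1 ω + 10 * X 2 ω ≤ x} ≤
      ℙ {ω | X 0 ω + 6 * X 1 ω + 10 * X 2 ω ≤ x} := by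
  intro x hx
  have hset : {ω | X 0 ω + 6 * X 1 ω + 10 * X 2 ω ≤ x}
      = {ω | 1 * X 0 ω + 6 * X 1 ω + 10 * X 2 ω ≤ x} := by
    ext ω; simp
  rw [hset,
    S16.main_comp X hmeas hindep hlaw (by norm_num) (by norm_num) (by norm_num)
      S16.Phi_nonneg_1 x,
    S16.main_comp X hmeas hindep hlaw (by norm_num) (by norm_num) (by norm_num)
      S16.Phi_nonneg_2 x]
  exact ENNReal.ofReal_le_ofReal (S16.Fc_le x hx)
end

section
/- Suppose f and g are twice continuously differentiable probability densities on an interval I ⊂ (0,∞), f is unimodal with f' > 0 exactly on an interval I₊ whose supremum is x₀ < ∞, f ≤_lr g (that is, f(x)g(y) ≥ f(y)g(x) for x ≤ y), and suppose the function f' - λg' has at most two sign changes on I with pattern +,-,+ for every λ > 0. If λ < f(x₀)/g(x₀) and f'(x) - λg'(x) crosses zero from below at some point of I₊, then f'(x) - λg'(x) ≥ 0 for all x ≥ x₀, and this yields the contradiction f(x₀) ≤ λ g(x₀). -/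
open Set Filter MeasureTheory

theorem stmt_17 (I : Set ℝ) (hI : I ⊆ Ioi 0) (hIconn : I.OrdConnected)
    (f g : ℝ → ℝ) (hf : ContDiff ℝ 2 f) (hg : ContDiff ℝ 2 g)
    (hfpos : ∀ x ∈ I, 0 < f x) (hgpos : ∀ x ∈ I, 0 < g x)
    (hsupp : ∀ x ∉ I, f x = 0 ∧ g x = 0)
    (hfdens : ∫ x in I, f x = 1) (hgdens : ∫ x in I, g x = 1)
    (hftop : Tendsto f atTop (nhds 0)) (hgtop : Tendsto g atTop (nhds 0))
    (hfint : IntegrableOn (deriv f) (Ici 0)) (hgint : IntegrableOn (deriv g) (Ici 0))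
    -- `f' > 0` exactly on an interval `Iplus` whose supremum is `x₀ < ∞`
    (Iplus : Set ℝ) (hIplus : Iplus = {x ∈ I | 0 < deriv f x})
    (hIplusConn : Iplus.OrdConnected) (x₀ : ℝ) (hx₀ : IsLUB Iplus x₀)
    -- `f` unimodal and `f ≤_lr g`
    (hlr : ∀ x y : ℝ, x ≤ y → f y * g x ≤ f x * g y)
    -- at most two sign changes with pattern `+,-,+` for every `λ > 0`
    (hpattern : ∀ lam : ℝ, 0 < lam → ∀ x ∈ I, ∀ y ∈ I, ∀ z ∈ I, x < y → y < z →
      ¬(deriv f x - lam * deriv g x < 0 ∧ 0 < deriv f y - lam * deriv g y ∧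
        deriv f z - lam * deriv g z < 0))
    (lam : ℝ) (hlam0 : 0 < lam) (hlam : lam < f x₀ / g x₀)
    -- `f' - λg'` crosses zero from below at some point of `Iplus`
    (hcross : ∃ a ∈ Iplus, ∃ b ∈ Iplus, a < b ∧
      deriv f a - lam * deriv g a < 0 ∧ 0 < deriv f b - lam * deriv g b) :
    (∀ x ∈ I, x₀ ≤ x → 0 ≤ deriv f x - lam * deriv g x) ∧ f x₀ ≤ lam * g x₀ := by
  obtain ⟨a, ha, b, hb, hab, hna, hpb⟩ := hcross
  have haI : a ∈ I := by rw [hIplus] at ha; exact ha.1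
  have hbI : b ∈ I := by rw [hIplus] at hb; exact hb.1
  have hbx₀ : b ≤ x₀ := hx₀.1 hb
  have hax₀ : a ≤ x₀ := hx₀.1 ha
  have hx₀pos : 0 < x₀ := lt_of_lt_of_le (hI haI) hax₀
  -- Part 1
  have part1 : ∀ x ∈ I, x₀ ≤ x → 0 ≤ deriv f x - lam * deriv g x := by
    intro x hxI hx₀x
    by_contra hneg
    push_neg at hneg
    rcases eq_or_lt_of_le (hbx₀.trans hx₀x) with heq | hlt
    · rw [heq] at hpb; linarith
    · exact hpattern lam hlam0 a haI b hbI x hxI hab hlt ⟨hna, hpb, hneg⟩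
  refine ⟨part1, ?_⟩
  -- derivatives vanish outside `I` above `x₀`
  have hzero : ∀ x, x₀ < x → x ∉ I → deriv f x = 0 ∧ deriv g x = 0 := by
    intro x hx hxI
    have hIci : ∀ (k : ℝ → ℝ), (∀ y ∉ I, k y = 0) → Differentiable ℝ k →
        deriv k x = 0 := by
      intro k hk hkd
      have hnotin : ∀ y ∈ Ici x, y ∉ I := by
        intro y hy hyI
        rcases eq_or_lt_of_le (mem_Ici.mp hy) with rfl | hlt
        · exact hxI hyI
        · exact hxI (hIconn.out haI hyI ⟨hax₀.trans hx.le, hlt.le⟩)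
      have h0 : HasDerivWithinAt k 0 (Ici x) x :=
        (hasDerivWithinAt_const x (Ici x) (0 : ℝ)).congr
          (fun y hy => hk y (hnotin y hy)) (hk x (hnotin x self_mem_Ici))
      have h1 : HasDerivWithinAt k (deriv k x) (Ici x) x :=
        (hkd x).hasDerivAt.hasDerivWithinAt
      have e1 := h1.derivWithin (uniqueDiffOn_Ici x x self_mem_Ici)
      have e0 := h0.derivWithin (uniqueDiffOn_Ici x x self_mem_Ici)
      rw [← e1, e0]
    exact ⟨hIci f (fun y hy => (hsupp y hy).1) (hf.differentiable (by norm_num)),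
      hIci g (fun y hy => (hsupp y hy).2) (hg.differentiable (by norm_num))⟩
  -- nonnegativity of the integrand on `Ioi x₀`
  have hnonneg : ∀ x ∈ Ioi x₀, 0 ≤ deriv f x - lam * deriv g x := by
    intro x hx
    by_cases hxI : x ∈ I
    · exact part1 x hxI (le_of_lt hx)
    · obtain ⟨h1, h2⟩ := hzero x hx hxI
      rw [h1, h2]; simp
  have hfderiv : ∀ x ∈ Ici x₀, HasDerivAt f (deriv f x) x :=
    fun x _ => (hf.differentiable (by norm_num) x).hasDerivAt
  have hgderiv : ∀ x ∈ Ici x₀, HasDerivAt g (deriv g x) x :=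
    fun x _ => (hg.differentiable (by norm_num) x).hasDerivAt
  have hsub : Ioi x₀ ⊆ Ici (0 : ℝ) := fun y hy => le_of_lt (hx₀pos.trans hy)
  have hfint' : IntegrableOn (deriv f) (Ioi x₀) := hfint.mono_set hsub
  have hgint' : IntegrableOn (deriv g) (Ioi x₀) := hgint.mono_set hsub
  have hF : ∫ x in Ioi x₀, deriv f x = 0 - f x₀ :=
    integral_Ioi_of_hasDerivAt_of_tendsto' hfderiv hfint' hftop
  have hG : ∫ x in Ioi x₀, deriv g x = 0 - g x₀ :=
    integral_Ioi_of_hasDerivAt_of_tendsto' hgderiv hgint' hgtop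
  have hint : ∫ x in Ioi x₀, (deriv f x - lam * deriv g x) = lam * g x₀ - f x₀ := by
    rw [integral_sub hfint' (hgint'.const_mul lam), MeasureTheory.integral_const_mul, hF, hG]
    ring
  have h0 : 0 ≤ ∫ x in Ioi x₀, (deriv f x - lam * deriv g x) :=
    setIntegral_nonneg measurableSet_Ioi hnonneg
  rw [hint] at h0; linarith
end
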